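/- arXiv:2107.07638 — 8 statements merged into one kernel-verified Lean document; each statement's English description precedes it below -/
import Mathlib

section
/- Linearity of Quasi Differential Quotients: let F, G : ℝ^n ⇝ ℝ^m be set-valued maps, x̄ ∈ ℝ^n, ȳ_F, ȳ_G ∈ ℝ^m, Γ_F, Γ_G ⊆ ℝ^n, and α, β ∈ ℝ. If Λ_F is a Quasi Differential Quotient of F at (x̄, ȳ_F) in the direction of Γ_F and Λ_G is a Quasi Differential Quotient of G at (x̄, ȳ_G) in the direction of Γ_G, then the set αΛ_F + βΛ_G := {αL₁ + βL₂ : L₁ ∈ Λ_F, L₂ ∈ Λ_G} is a Quasi Differential Quotient of the set-valued map αF + βG : x ⇝ {αy₁ + βy₂ : y₁ ∈ F(x), y₂ ∈ G(x)} at (x̄, αȳ_F + βȳ_G) in the direction of Γ_F ∩ Γ_G. -/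
open Metric Set Filter Topology

/-- A modulus: a non-decreasing non-negative function `ρ : [0,∞) → [0,∞)`
with `ρ(δ) → 0` as `δ → 0⁺`. -/
def IsModulus (ρ : ℝ → ℝ) : Prop :=
  (∀ δ, 0 ≤ ρ δ) ∧ MonotoneOn ρ (Set.Ici 0) ∧
    Filter.Tendsto ρ (nhdsWithin 0 (Set.Ioi 0)) (nhds 0)

/-- `Λ` is a Quasi Differential Quotient (QDQ) of the set-valued map `Fm` at `(xb, yb)`
in the direction of `Γ`. -/
def IsQDQ {E F : Type*} [NormedAddCommGroup E] [NormedSpace ℝ E]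
    [NormedAddCommGroup F] [NormedSpace ℝ F]
    (Fm : E → Set F) (xb : E) (yb : F) (Γ : Set E) (Λ : Set (E →L[ℝ] F)) : Prop :=
  IsCompact Λ ∧
  ∃ δs : ℝ, 0 < δs ∧ ∃ ρ : ℝ → ℝ, IsModulus ρ ∧
    ∀ δ : ℝ, 0 < δ → δ < δs →
      ∃ (L : E → E →L[ℝ] F) (h : E → F),
        ContinuousOn (fun x => (L x, h x)) (Metric.closedBall xb δ ∩ Γ) ∧
        ∀ x ∈ Metric.closedBall xb δ ∩ Γ,
          Metric.infDist (L x) Λ ≤ ρ δ ∧ ‖h x‖ ≤ δ * ρ δ ∧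
          yb + (L x) (x - xb) + h x ∈ Fm x

set_option maxHeartbeats 1000000 in
/-- Linearity of Quasi Differential Quotients. -/
theorem qdq_linearity {n m : ℕ}
    (F G : EuclideanSpace ℝ (Fin n) → Set (EuclideanSpace ℝ (Fin m)))
    (xb : EuclideanSpace ℝ (Fin n)) (ybF ybG : EuclideanSpace ℝ (Fin m))
    (ΓF ΓG : Set (EuclideanSpace ℝ (Fin n)))
    (ΛF ΛG : Set (EuclideanSpace ℝ (Fin n) →L[ℝ] EuclideanSpace ℝ (Fin m)))
    (α β : ℝ)
    (hF : IsQDQ F xb ybF ΓF ΛF) (hG : IsQDQ G xb ybG ΓG ΛG) :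
    IsQDQ (fun x => {y | ∃ y₁ ∈ F x, ∃ y₂ ∈ G x, y = α • y₁ + β • y₂})
      xb (α • ybF + β • ybG) (ΓF ∩ ΓG)
      {L | ∃ L₁ ∈ ΛF, ∃ L₂ ∈ ΛG, L = α • L₁ + β • L₂} := by
  obtain ⟨hcF, δF, hδF, ρF, hρF, hFmain⟩ := hF
  obtain ⟨hcG, δG, hδG, ρG, hρG, hGmain⟩ := hG
  set Λ : Set (EuclideanSpace ℝ (Fin n) →L[ℝ] EuclideanSpace ℝ (Fin m)) :=
    {L | ∃ L₁ ∈ ΛF, ∃ L₂ ∈ ΛG, L = α • L₁ + β • L₂} with hΛ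
  have hΛeq : Λ = (fun p : (EuclideanSpace ℝ (Fin n) →L[ℝ] EuclideanSpace ℝ (Fin m)) ×
      (EuclideanSpace ℝ (Fin n) →L[ℝ] EuclideanSpace ℝ (Fin m)) => α • p.1 + β • p.2) ''
      (ΛF ×ˢ ΛG) := by
    ext L
    simp only [hΛ, Set.mem_setOf_eq, Set.mem_image, Set.mem_prod, Prod.exists]
    constructor
    · rintro ⟨L₁, h1, L₂, h2, rfl⟩; exact ⟨L₁, L₂, ⟨h1, h2⟩, rfl⟩
    · rintro ⟨L₁, L₂, ⟨h1, h2⟩, rfl⟩; exact ⟨L₁, h1, L₂, h2, rfl⟩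
  constructor
  · rw [hΛeq]
    exact (hcF.prod hcG).image (by fun_prop)
  refine ⟨min δF δG, lt_min hδF hδG, fun δ => |α| * ρF δ + |β| * ρG δ, ?_, ?_⟩
  · refine ⟨fun δ => add_nonneg (mul_nonneg (abs_nonneg α) (hρF.1 δ))
      (mul_nonneg (abs_nonneg β) (hρG.1 δ)), ?_, ?_⟩
    · intro a ha b hb hab
      exact add_le_add (mul_le_mul_of_nonneg_left (hρF.2.1 ha hb hab) (abs_nonneg α))
        (mul_le_mul_of_nonneg_left (hρG.2.1 ha hb hab) (abs_nonneg β))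
    · have := ((hρF.2.2.const_mul |α|).add (hρG.2.2.const_mul |β|))
      simpa using this
  · intro δ hδ hδlt
    obtain ⟨LF, hhF, hcontF, hmainF⟩ := hFmain δ hδ (lt_of_lt_of_le hδlt (min_le_left _ _))
    obtain ⟨LG, hhG, hcontG, hmainG⟩ := hGmain δ hδ (lt_of_lt_of_le hδlt (min_le_right _ _))
    refine ⟨fun x => α • LF x + β • LG x, fun x => α • hhF x + β • hhG x, ?_, ?_⟩
    · have hsubF : Metric.closedBall xb δ ∩ (ΓF ∩ ΓG) ⊆ Metric.closedBall xb δ ∩ ΓF :=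
        Set.inter_subset_inter_right _ (Set.inter_subset_left)
      have hsubG : Metric.closedBall xb δ ∩ (ΓF ∩ ΓG) ⊆ Metric.closedBall xb δ ∩ ΓG :=
        Set.inter_subset_inter_right _ (Set.inter_subset_right)
      have h1 := (hcontF.mono hsubF)
      have h2 := (hcontG.mono hsubG)
      have hLF : ContinuousOn LF (Metric.closedBall xb δ ∩ (ΓF ∩ ΓG)) := h1.fst
      have hLG : ContinuousOn LG (Metric.closedBall xb δ ∩ (ΓF ∩ ΓG)) := h2.fst
      have hhF' : ContinuousOn hhF (Metric.closedBall xb δ ∩ (ΓF ∩ ΓG)) := h1.snd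
      have hhG' : ContinuousOn hhG (Metric.closedBall xb δ ∩ (ΓF ∩ ΓG)) := h2.snd
      exact ContinuousOn.prodMk ((hLF.const_smul α).add (hLG.const_smul β))
        ((hhF'.const_smul α).add (hhG'.const_smul β))
    · rintro x ⟨hxball, hxF, hxG⟩
      obtain ⟨hdF, hnF, hmemF⟩ := hmainF x ⟨hxball, hxF⟩
      obtain ⟨hdG, hnG, hmemG⟩ := hmainG x ⟨hxball, hxG⟩
      refine ⟨?_, ?_, ?_⟩
      · by_cases hne : ΛF.Nonempty ∧ ΛG.Nonempty
        · obtain ⟨hneF, hneG⟩ := hne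
          obtain ⟨L₁, hL₁, hd₁⟩ := hcF.exists_infDist_eq_dist hneF (LF x)
          obtain ⟨L₂, hL₂, hd₂⟩ := hcG.exists_infDist_eq_dist hneG (LG x)
          have hmem : α • L₁ + β • L₂ ∈ Λ := ⟨L₁, hL₁, L₂, hL₂, rfl⟩
          calc Metric.infDist (α • LF x + β • LG x) Λ
              ≤ dist (α • LF x + β • LG x) (α • L₁ + β • L₂) :=
                Metric.infDist_le_dist_of_mem hmem
            _ ≤ |α| * dist (LF x) L₁ + |β| * dist (LG x) L₂ := by
                rw [dist_eq_norm, dist_eq_norm, dist_eq_norm]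
                calc ‖(α • LF x + β • LG x) - (α • L₁ + β • L₂)‖
                    = ‖α • (LF x - L₁) + β • (LG x - L₂)‖ := by congr 1; module
                  _ ≤ ‖α • (LF x - L₁)‖ + ‖β • (LG x - L₂)‖ := norm_add_le _ _
                  _ = |α| * ‖LF x - L₁‖ + |β| * ‖LG x - L₂‖ := by
                      have e1 : ‖α • (LF x - L₁)‖ = |α| * ‖LF x - L₁‖ :=
                        (norm_smul α (LF x - L₁)).trans (by rw [Real.norm_eq_abs])
                      have e2 : ‖β • (LG x - L₂)‖ = |β| * ‖LG x - L₂‖ :=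
                        (norm_smul β (LG x - L₂)).trans (by rw [Real.norm_eq_abs])
                      rw [e1, e2]
            _ ≤ |α| * ρF δ + |β| * ρG δ := by
                rw [← hd₁] at *; rw [← hd₂] at *
                gcongr
        · have hΛe : Λ = ∅ := by
            rw [Set.eq_empty_iff_forall_notMem]
            rintro L ⟨L₁, hL₁, L₂, hL₂, rfl⟩
            exact hne ⟨⟨L₁, hL₁⟩, ⟨L₂, hL₂⟩⟩
          rw [hΛe, Metric.infDist_empty]
          exact add_nonneg (mul_nonneg (abs_nonneg α) (hρF.1 δ))
            (mul_nonneg (abs_nonneg β) (hρG.1 δ))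
      · calc ‖α • hhF x + β • hhG x‖ ≤ ‖α • hhF x‖ + ‖β • hhG x‖ := norm_add_le _ _
          _ = |α| * ‖hhF x‖ + |β| * ‖hhG x‖ := by
              simp [norm_smul]
          _ ≤ |α| * (δ * ρF δ) + |β| * (δ * ρG δ) := by gcongr
          _ = δ * (|α| * ρF δ + |β| * ρG δ) := by ring
      · refine ⟨ybF + LF x (x - xb) + hhF x, hmemF, ybG + LG x (x - xb) + hhG x, hmemG, ?_⟩
        simp only [ContinuousLinearMap.add_apply, ContinuousLinearMap.coe_smul',
          Pi.smul_apply, smul_add]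
        abel
end

section
/- Set product property of Quasi Differential Quotients: let F : ℝ^n ⇝ ℝ^{m₁} and G : ℝ^n ⇝ ℝ^{m₂} be set-valued maps, x̄ ∈ ℝ^n, ȳ_F ∈ ℝ^{m₁}, ȳ_G ∈ ℝ^{m₂}, Γ_F, Γ_G ⊆ ℝ^n. If Λ_F is a Quasi Differential Quotient of F at (x̄, ȳ_F) in the direction of Γ_F and Λ_G is a Quasi Differential Quotient of G at (x̄, ȳ_G) in the direction of Γ_G, then the set Λ_F × Λ_G := {x ↦ (L₁x, L₂x) : L₁ ∈ Λ_F, L₂ ∈ Λ_G} of linear maps from ℝ^n to ℝ^{m₁} × ℝ^{m₂} is a Quasi Differential Quotient of the set-valued map F × G : x ⇝ F(x) × G(x) at (x̄, (ȳ_F, ȳ_G)) in the direction of Γ_F ∩ Γ_G. -/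
open Metric Set Filter Topology

/-- Set product property of Quasi Differential Quotients. -/
theorem qdq_set_product {n m₁ m₂ : ℕ}
    (F : EuclideanSpace ℝ (Fin n) → Set (EuclideanSpace ℝ (Fin m₁)))
    (G : EuclideanSpace ℝ (Fin n) → Set (EuclideanSpace ℝ (Fin m₂)))
    (xb : EuclideanSpace ℝ (Fin n))
    (ybF : EuclideanSpace ℝ (Fin m₁)) (ybG : EuclideanSpace ℝ (Fin m₂))
    (ΓF ΓG : Set (EuclideanSpace ℝ (Fin n)))
    (ΛF : Set (EuclideanSpace ℝ (Fin n) →L[ℝ] EuclideanSpace ℝ (Fin m₁)))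
    (ΛG : Set (EuclideanSpace ℝ (Fin n) →L[ℝ] EuclideanSpace ℝ (Fin m₂)))
    (hF : IsQDQ F xb ybF ΓF ΛF) (hG : IsQDQ G xb ybG ΓG ΛG) :
    IsQDQ (fun x => (F x) ×ˢ (G x)) xb (ybF, ybG) (ΓF ∩ ΓG)
      {L | ∃ L₁ ∈ ΛF, ∃ L₂ ∈ ΛG, L = L₁.prod L₂} := by
  obtain ⟨hΛF, δF, hδF, ρF, hρF, hAF⟩ := hF
  obtain ⟨hΛG, δG, hδG, ρG, hρG, hAG⟩ := hG
  have hcontprod : Continuous (fun p : (EuclideanSpace ℝ (Fin n) →L[ℝ] EuclideanSpace ℝ (Fin m₁)) ×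
      (EuclideanSpace ℝ (Fin n) →L[ℝ] EuclideanSpace ℝ (Fin m₂)) => p.1.prod p.2) :=
    (ContinuousLinearMap.prodₗᵢ (E := EuclideanSpace ℝ (Fin n)) ℝ).continuous
  have hset : {L | ∃ L₁ ∈ ΛF, ∃ L₂ ∈ ΛG, L = L₁.prod L₂} =
      (fun p : _ × _ => p.1.prod p.2) '' (ΛF ×ˢ ΛG) := by
    ext L
    constructor
    · rintro ⟨L₁, h₁, L₂, h₂, rfl⟩; exact ⟨(L₁, L₂), ⟨h₁, h₂⟩, rfl⟩
    · rintro ⟨⟨L₁, L₂⟩, ⟨h₁, h₂⟩, rfl⟩; exact ⟨L₁, h₁, L₂, h₂, rfl⟩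
  refine ⟨hset ▸ (hΛF.prod hΛG).image hcontprod, min δF δG, lt_min hδF hδG,
    ρF + ρG, ⟨fun δ => add_nonneg (hρF.1 δ) (hρG.1 δ),
      hρF.2.1.add hρG.2.1, by simpa [Pi.add_def] using hρF.2.2.add hρG.2.2⟩, ?_⟩
  intro δ hδ0 hδlt
  obtain ⟨LF, hF', hcF, hmF⟩ := hAF δ hδ0 (lt_of_lt_of_le hδlt (min_le_left _ _))
  obtain ⟨LG, hG', hcG, hmG⟩ := hAG δ hδ0 (lt_of_lt_of_le hδlt (min_le_right _ _))
  have hsubF : Metric.closedBall xb δ ∩ (ΓF ∩ ΓG) ⊆ Metric.closedBall xb δ ∩ ΓF :=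
    fun x hx => ⟨hx.1, hx.2.1⟩
  have hsubG : Metric.closedBall xb δ ∩ (ΓF ∩ ΓG) ⊆ Metric.closedBall xb δ ∩ ΓG :=
    fun x hx => ⟨hx.1, hx.2.2⟩
  refine ⟨fun x => (LF x).prod (LG x), fun x => (hF' x, hG' x), ?_, ?_⟩
  · have h1 := (hcF.mono hsubF)
    have h2 := (hcG.mono hsubG)
    have : ContinuousOn (fun x => ((LF x, hF' x), (LG x, hG' x)))
        (Metric.closedBall xb δ ∩ (ΓF ∩ ΓG)) := h1.prodMk h2
    exact ((hcontprod.comp (continuous_fst.fst.prodMk continuous_snd.fst)).prodMk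
      (continuous_fst.snd.prodMk continuous_snd.snd)).comp_continuousOn this
  · intro x hx
    obtain ⟨hdF, hnF, hmemF⟩ := hmF x (hsubF hx)
    obtain ⟨hdG, hnG, hmemG⟩ := hmG x (hsubG hx)
    refine ⟨?_, ?_, hmemF, hmemG⟩
    · -- infDist bound
      rcases ΛF.eq_empty_or_nonempty with hE | hneF
      · have : {L | ∃ L₁ ∈ ΛF, ∃ L₂ ∈ ΛG, L = L₁.prod L₂} = ∅ := by
          simp [hE]
        rw [this, Metric.infDist_empty]
        exact add_nonneg (hρF.1 δ) (hρG.1 δ)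
      rcases ΛG.eq_empty_or_nonempty with hE | hneG
      · have : {L | ∃ L₁ ∈ ΛF, ∃ L₂ ∈ ΛG, L = L₁.prod L₂} = ∅ := by
          simp [hE]
        rw [this, Metric.infDist_empty]
        exact add_nonneg (hρF.1 δ) (hρG.1 δ)
      obtain ⟨K₁, hK₁, hK₁d⟩ := hΛF.exists_infDist_eq_dist hneF (LF x)
      obtain ⟨K₂, hK₂, hK₂d⟩ := hΛG.exists_infDist_eq_dist hneG (LG x)
      have hmem : K₁.prod K₂ ∈ {L | ∃ L₁ ∈ ΛF, ∃ L₂ ∈ ΛG, L = L₁.prod L₂} :=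
        ⟨K₁, hK₁, K₂, hK₂, rfl⟩
      refine le_trans (Metric.infDist_le_dist_of_mem hmem) ?_
      have hdist : dist ((LF x).prod (LG x)) (K₁.prod K₂) = dist (LF x, LG x) (K₁, K₂) := by
        rw [dist_eq_norm, dist_eq_norm]
        have : (LF x).prod (LG x) - K₁.prod K₂ = (LF x - K₁).prod (LG x - K₂) := by
          ext y <;> simp
        rw [this, ContinuousLinearMap.opNorm_prod]
        rfl
      rw [hdist, Prod.dist_eq]
      refine max_le ?_ ?_
      · calc dist (LF x) K₁ = Metric.infDist (LF x) ΛF := hK₁d.symm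
          _ ≤ ρF δ := hdF
          _ ≤ ρF δ + ρG δ := le_add_of_nonneg_right (hρG.1 δ)
      · calc dist (LG x) K₂ = Metric.infDist (LG x) ΛG := hK₂d.symm
          _ ≤ ρG δ := hdG
          _ ≤ ρF δ + ρG δ := le_add_of_nonneg_left (hρF.1 δ)
    · rw [Prod.norm_def]
      refine max_le (hnF.trans ?_) (hnG.trans ?_)
      · have : δ * (ρF + ρG) δ = δ * ρF δ + δ * ρG δ := by simp [mul_add]
        rw [this]; exact le_add_of_nonneg_right (mul_nonneg hδ0.le (hρG.1 δ))
      · have : δ * (ρF + ρG) δ = δ * ρF δ + δ * ρG δ := by simp [mul_add]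
        rw [this]; exact le_add_of_nonneg_left (mul_nonneg hδ0.le (hρF.1 δ))
end

section
/- Product rule for Quasi Differential Quotients: let F, G : ℝ^n ⇝ ℝ be set-valued maps, x̄ ∈ ℝ^n, ȳ_F, ȳ_G ∈ ℝ, Γ_F, Γ_G ⊆ ℝ^n. If Λ_F is a Quasi Differential Quotient of F at (x̄, ȳ_F) in the direction of Γ_F and Λ_G is a Quasi Differential Quotient of G at (x̄, ȳ_G) in the direction of Γ_G, then the set ȳ_F Λ_G + ȳ_G Λ_F := {ȳ_F L₂ + ȳ_G L₁ : L₁ ∈ Λ_F, L₂ ∈ Λ_G} is a Quasi Differential Quotient of the set-valued map FG : x ⇝ {y₁·y₂ : y₁ ∈ F(x), y₂ ∈ G(x)} at (x̄, ȳ_F·ȳ_G) in the direction of Γ_F ∩ Γ_G. -/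
open Metric Set Filter Topology

section Aux
variable {E : Type*} [NormedAddCommGroup E] [InnerProductSpace ℝ E]
open Classical

/-- rank one map used to absorb a continuous residual into `L`. -/
noncomputable def rkAux (q : E → ℝ) (xb : E) : E → (E →L[ℝ] ℝ) :=
  fun x => (if x = xb then 0 else q x / ‖x - xb‖ ^ 2) • innerSL ℝ (x - xb)

lemma rkAux_xb (q : E → ℝ) (xb : E) : rkAux q xb xb = 0 := by
  simp [rkAux]

lemma rkAux_apply (q : E → ℝ) (xb x : E) (hx : x ≠ xb) :
    rkAux q xb x (x - xb) = q x := by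
  have h0 : ‖x - xb‖ ^ 2 ≠ 0 :=
    pow_ne_zero _ (norm_ne_zero_iff.mpr (sub_ne_zero.mpr hx))
  have hinner : (innerSL ℝ (x - xb)) (x - xb) = ‖x - xb‖ ^ 2 :=
    real_inner_self_eq_norm_sq _
  simp only [rkAux, if_neg hx, ContinuousLinearMap.smul_apply, smul_eq_mul, hinner]
  exact div_mul_cancel₀ _ h0

lemma rkAux_norm (q : E → ℝ) (xb x : E) (hx : x ≠ xb) :
    ‖rkAux q xb x‖ = |q x| / ‖x - xb‖ := by
  have ht : ‖x - xb‖ ≠ 0 := norm_ne_zero_iff.mpr (sub_ne_zero.mpr hx)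
  rw [rkAux, if_neg hx]
  rw [norm_smul (q x / ‖x - xb‖ ^ 2) (innerSL ℝ (x - xb))]
  simp only [Real.norm_eq_abs, innerSL_apply_norm]
  rw [abs_div, abs_of_nonneg (sq_nonneg ‖x - xb‖), sq]
  field_simp

lemma rkAux_contWithinAt_ne (q : E → ℝ) (D : Set E) (xb x₀ : E)
    (hq : ContinuousOn q D) (hx₀ : x₀ ∈ D) (hne : x₀ ≠ xb) :
    ContinuousWithinAt (rkAux q xb) D x₀ := by
  set g : E → (E →L[ℝ] ℝ) := fun x => (q x / ‖x - xb‖ ^ 2) • innerSL ℝ (x - xb) with hg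
  have hgc : ContinuousWithinAt g D x₀ := by
    refine ContinuousWithinAt.smul (f := fun x => q x / ‖x - xb‖ ^ 2) (g := fun x => innerSL ℝ (x - xb)) ?_ ?_
    · exact ((hq x₀ hx₀).div
        (((continuous_norm.comp (continuous_id.sub continuous_const)).pow 2).continuousWithinAt)
        (pow_ne_zero _ (norm_ne_zero_iff.mpr (sub_ne_zero.mpr hne))))
    · exact ((innerSL ℝ).continuous.comp (continuous_id.sub continuous_const)).continuousWithinAt
  have hev : rkAux q xb =ᶠ[nhdsWithin x₀ D] g := by
    filter_upwards [mem_nhdsWithin_of_mem_nhds (isOpen_compl_singleton.mem_nhds hne)] with x hx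
    simp only [rkAux, hg, if_neg (show x ≠ xb from hx)]
  exact hgc.congr_of_eventuallyEq hev (by simp only [rkAux, hg, if_neg hne])

lemma minmax_aux (s : ℝ) : min 1 s + max 0 (1 - s) = 1 := by
  rcases le_total s 1 with h | h
  · rw [min_eq_right h, max_eq_right (by linarith)]; ring
  · rw [min_eq_left h, max_eq_left (by linarith)]; ring

end Aux

set_option maxHeartbeats 2000000 in
set_option synthInstance.maxHeartbeats 400000 in
/-- Product rule for Quasi Differential Quotients. -/
theorem qdq_product_rule {n : ℕ}
    (F G : EuclideanSpace ℝ (Fin n) → Set ℝ)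
    (xb : EuclideanSpace ℝ (Fin n)) (ybF ybG : ℝ)
    (ΓF ΓG : Set (EuclideanSpace ℝ (Fin n)))
    (ΛF ΛG : Set (EuclideanSpace ℝ (Fin n) →L[ℝ] ℝ))
    (hF : IsQDQ F xb ybF ΓF ΛF) (hG : IsQDQ G xb ybG ΓG ΛG) :
    IsQDQ (fun x => {y | ∃ y₁ ∈ F x, ∃ y₂ ∈ G x, y = y₁ * y₂})
      xb (ybF * ybG) (ΓF ∩ ΓG)
      {L | ∃ L₁ ∈ ΛF, ∃ L₂ ∈ ΛG, L = ybF • L₂ + ybG • L₁} := by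
  classical
  obtain ⟨hcF, δsF, hδsF, ρF, ⟨hρF0, hρFm, hρFt⟩, hFsel⟩ := hF
  obtain ⟨hcG, δsG, hδsG, ρG, ⟨hρG0, hρGm, hρGt⟩, hGsel⟩ := hG
  set MF : ℝ := sSup ((fun L => ‖L‖) '' ΛF) with hMFdef
  set MG : ℝ := sSup ((fun L => ‖L‖) '' ΛG) with hMGdef
  have hMF0 : 0 ≤ MF := by
    rcases ΛF.eq_empty_or_nonempty with h | ⟨L₀, hL₀⟩
    · simp [hMFdef, h, Real.sSup_empty]
    · exact le_trans (norm_nonneg L₀)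
        (le_csSup ((hcF.image continuous_norm).bddAbove) ⟨L₀, hL₀, rfl⟩)
  have hMG0 : 0 ≤ MG := by
    rcases ΛG.eq_empty_or_nonempty with h | ⟨L₀, hL₀⟩
    · simp [hMGdef, h, Real.sSup_empty]
    · exact le_trans (norm_nonneg L₀)
        (le_csSup ((hcG.image continuous_norm).bddAbove) ⟨L₀, hL₀, rfl⟩)
  have hMFle : ∀ L₁ ∈ ΛF, ‖L₁‖ ≤ MF := fun L₁ h₁ =>
    le_csSup ((hcF.image continuous_norm).bddAbove) ⟨L₁, h₁, rfl⟩
  have hMGle : ∀ L₂ ∈ ΛG, ‖L₂‖ ≤ MG := fun L₂ h₂ =>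
    le_csSup ((hcG.image continuous_norm).bddAbove) ⟨L₂, h₂, rfl⟩
  set ρ : ℝ → ℝ := fun δ => |ybF| * ρG δ + |ybG| * ρF δ +
      max δ 0 * ((MF + 2 * ρF δ + 1) * (MG + 2 * ρG δ + 1)) with hρdef
  have hCF0 : ∀ δ, 0 ≤ MF + 2 * ρF δ + 1 := fun δ => by nlinarith [hρF0 δ]
  have hCG0 : ∀ δ, 0 ≤ MG + 2 * ρG δ + 1 := fun δ => by nlinarith [hρG0 δ]
  have hρmod : IsModulus ρ := by
    refine ⟨fun δ => ?_, ?_, ?_⟩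
    · have h1 := hρF0 δ; have h2 := hρG0 δ
      have h3 : (0:ℝ) ≤ max δ 0 := le_max_right _ _
      have h4 := mul_nonneg (hCF0 δ) (hCG0 δ)
      have := mul_nonneg h3 h4
      have := mul_nonneg (abs_nonneg ybF) h2
      have := mul_nonneg (abs_nonneg ybG) h1
      simp only [hρdef]; linarith
    · intro a ha b hb hab
      have h1 : ρF a ≤ ρF b := hρFm ha hb hab
      have h2 : ρG a ≤ ρG b := hρGm ha hb hab
      have h3 : max a 0 ≤ max b 0 := max_le_max hab le_rfl
      simp only [hρdef]
      refine add_le_add (add_le_add ?_ ?_) ?_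
      · exact mul_le_mul_of_nonneg_left h2 (abs_nonneg _)
      · exact mul_le_mul_of_nonneg_left h1 (abs_nonneg _)
      · refine mul_le_mul h3 ?_ (mul_nonneg (hCF0 a) (hCG0 a)) (le_max_right b 0)
        exact mul_le_mul (by linarith) (by linarith) (hCG0 a)
          (by linarith [hρF0 b])
    · have tmax : Tendsto (fun δ : ℝ => max δ 0) (nhdsWithin 0 (Set.Ioi 0)) (nhds 0) := by
        have h : Tendsto (fun δ : ℝ => max δ 0) (nhds 0) (nhds (max 0 0)) :=
          (continuous_id.max continuous_const).tendsto 0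
        simpa using h.mono_left nhdsWithin_le_nhds
      have t3 : Tendsto (fun δ => (MF + 2 * ρF δ + 1) * (MG + 2 * ρG δ + 1))
          (nhdsWithin 0 (Set.Ioi 0)) (nhds ((MF + 2 * 0 + 1) * (MG + 2 * 0 + 1))) :=
        ((tendsto_const_nhds.add (hρFt.const_mul 2)).add tendsto_const_nhds).mul
          ((tendsto_const_nhds.add (hρGt.const_mul 2)).add tendsto_const_nhds)
      have htot := ((hρGt.const_mul |ybF|).add (hρFt.const_mul |ybG|)).add (tmax.mul t3)
      simpa using htot
  refine ⟨?_, min δsF δsG, lt_min hδsF hδsG, ρ, hρmod, ?_⟩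
  · have himg : {L | ∃ L₁ ∈ ΛF, ∃ L₂ ∈ ΛG, L = ybF • L₂ + ybG • L₁} =
        (fun pq : (EuclideanSpace ℝ (Fin n) →L[ℝ] ℝ) × (EuclideanSpace ℝ (Fin n) →L[ℝ] ℝ) =>
          ybF • pq.2 + ybG • pq.1) '' (ΛF ×ˢ ΛG) := by
      ext L
      constructor
      · rintro ⟨L₁, h₁, L₂, h₂, rfl⟩; exact ⟨(L₁, L₂), ⟨h₁, h₂⟩, rfl⟩
      · rintro ⟨⟨L₁, L₂⟩, ⟨h₁, h₂⟩, rfl⟩; exact ⟨L₁, h₁, L₂, h₂, rfl⟩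
    rw [himg]
    exact (hcF.prod hcG).image
      ((continuous_snd.const_smul ybF).add (continuous_fst.const_smul ybG))
  intro δ hδ0 hδlt
  have hδF : δ < δsF := lt_of_lt_of_le hδlt (min_le_left _ _)
  have hδG : δ < δsG := lt_of_lt_of_le hδlt (min_le_right _ _)
  obtain ⟨LF, hFh, hFcont, hFprop⟩ := hFsel δ hδ0 hδF
  obtain ⟨LG, hGh, hGcont, hGprop⟩ := hGsel δ hδ0 hδG
  set D := closedBall xb δ ∩ (ΓF ∩ ΓG) with hDdef
  have hDF : ∀ x ∈ D, x ∈ closedBall xb δ ∩ ΓF := fun x hx => ⟨hx.1, hx.2.1⟩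
  have hDG : ∀ x ∈ D, x ∈ closedBall xb δ ∩ ΓG := fun x hx => ⟨hx.1, hx.2.2⟩
  have hLFc : ContinuousOn LF D :=
    continuous_fst.comp_continuousOn (hFcont.mono fun x hx => hDF x hx)
  have hhFc : ContinuousOn hFh D :=
    continuous_snd.comp_continuousOn (hFcont.mono fun x hx => hDF x hx)
  have hLGc : ContinuousOn LG D :=
    continuous_fst.comp_continuousOn (hGcont.mono fun x hx => hDG x hx)
  have hhGc : ContinuousOn hGh D :=
    continuous_snd.comp_continuousOn (hGcont.mono fun x hx => hDG x hx)
  set p : EuclideanSpace ℝ (Fin n) → ℝ := fun x =>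
      (ybF + LF x (x - xb) + hFh x) * (ybG + LG x (x - xb) + hGh x) - ybF * ybG with hpdef
  have hyFc : ContinuousOn (fun x => ybF + LF x (x - xb) + hFh x) D :=
    (continuousOn_const.add (hLFc.clm_apply
      ((continuous_id.sub continuous_const).continuousOn))).add hhFc
  have hyGc : ContinuousOn (fun x => ybG + LG x (x - xb) + hGh x) D :=
    (continuousOn_const.add (hLGc.clm_apply
      ((continuous_id.sub continuous_const).continuousOn))).add hhGc
  have hpc : ContinuousOn p D := (hyFc.mul hyGc).sub continuousOn_const
  have hρδ0 : 0 ≤ ρ δ := hρmod.1 δ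
  have hmaxδ : max δ 0 = δ := max_eq_left hδ0.le
  have hpmem : ∀ x ∈ D, ∃ y₁ ∈ F x, ∃ y₂ ∈ G x, ybF * ybG + p x = y₁ * y₂ := by
    intro x hx
    exact ⟨ybF + LF x (x - xb) + hFh x, (hFprop x (hDF x hx)).2.2,
      ybG + LG x (x - xb) + hGh x, (hGprop x (hDG x hx)).2.2, by simp only [hpdef]; ring⟩
  by_cases hne : ΛF.Nonempty ∧ ΛG.Nonempty
  · -- both Λ's nonempty: use the natural construction
    refine ⟨fun x => ybF • LG x + ybG • LF x,
      fun x => p x - (ybF • LG x + ybG • LF x) (x - xb), ?_, ?_⟩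
    · have hLc : ContinuousOn (fun x => ybF • LG x + ybG • LF x) D :=
        (hLGc.const_smul ybF).add (hLFc.const_smul ybG)
      exact hLc.prodMk (hpc.sub (hLc.clm_apply
        ((continuous_id.sub continuous_const).continuousOn)))
    · intro x hx
      obtain ⟨hdF, hhF, hmemF⟩ := hFprop x (hDF x hx)
      obtain ⟨hdG, hhG, hmemG⟩ := hGprop x (hDG x hx)
      obtain ⟨L₁, hL₁, hL₁e⟩ := hcF.exists_infDist_eq_dist hne.1 (LF x)
      obtain ⟨L₂, hL₂, hL₂e⟩ := hcG.exists_infDist_eq_dist hne.2 (LG x)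
      have hd1 : ‖LF x - L₁‖ ≤ ρF δ := by rw [← dist_eq_norm, ← hL₁e]; exact hdF
      have hd2 : ‖LG x - L₂‖ ≤ ρG δ := by rw [← dist_eq_norm, ← hL₂e]; exact hdG
      have hnF : ‖LF x‖ ≤ MF + ρF δ := by
        have h1 := norm_sub_norm_le (LF x) L₁
        have h2 := hMFle L₁ hL₁
        linarith
      have hnG : ‖LG x‖ ≤ MG + ρG δ := by
        have h1 := norm_sub_norm_le (LG x) L₂
        have h2 := hMGle L₂ hL₂
        linarith
      have hxn : ‖x - xb‖ ≤ δ := by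
        have h := hx.1
        rwa [mem_closedBall, dist_eq_norm] at h
      refine ⟨?_, ?_, ?_⟩
      · -- infDist bound
        refine le_trans (infDist_le_dist_of_mem
          (show ybF • L₂ + ybG • L₁ ∈ {L | ∃ L₁ ∈ ΛF, ∃ L₂ ∈ ΛG, L = ybF • L₂ + ybG • L₁}
            from ⟨L₁, hL₁, L₂, hL₂, rfl⟩)) ?_
        have heq : (ybF • LG x + ybG • LF x) - (ybF • L₂ + ybG • L₁) =
            ybF • (LG x - L₂) + ybG • (LF x - L₁) := by
          rw [smul_sub, smul_sub]; abel
        have hdd : dist (ybF • LG x + ybG • LF x) (ybF • L₂ + ybG • L₁) ≤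
            |ybF| * ‖LG x - L₂‖ + |ybG| * ‖LF x - L₁‖ := by
          rw [dist_eq_norm, heq]
          refine le_trans (norm_add_le _ _) ?_
          rw [norm_smul ybF (LG x - L₂), norm_smul ybG (LF x - L₁), Real.norm_eq_abs, Real.norm_eq_abs]
        have hrest : 0 ≤ max δ 0 * ((MF + 2 * ρF δ + 1) * (MG + 2 * ρG δ + 1)) :=
          mul_nonneg (le_max_right _ _) (mul_nonneg (hCF0 δ) (hCG0 δ))
        have h1 : |ybF| * ‖LG x - L₂‖ ≤ |ybF| * ρG δ :=
          mul_le_mul_of_nonneg_left hd2 (abs_nonneg _)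
        have h2 : |ybG| * ‖LF x - L₁‖ ≤ |ybG| * ρF δ :=
          mul_le_mul_of_nonneg_left hd1 (abs_nonneg _)
        simp only [hρdef]
        linarith
      · -- bound on h
        have happ : (ybF • LG x + ybG • LF x) (x - xb) =
            ybF * (LG x (x - xb)) + ybG * (LF x (x - xb)) := by
          simp [ContinuousLinearMap.add_apply, ContinuousLinearMap.coe_smul',
            Pi.smul_apply, smul_eq_mul]
        have hhx : p x - (ybF • LG x + ybG • LF x) (x - xb) =
            ybF * hGh x + ybG * hFh x +
              (LF x (x - xb) + hFh x) * (LG x (x - xb) + hGh x) := by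
          rw [happ]; simp only [hpdef]; ring
        show ‖p x - (ybF • LG x + ybG • LF x) (x - xb)‖ ≤ δ * ρ δ
        rw [Real.norm_eq_abs, hhx]
        rw [Real.norm_eq_abs] at hhF hhG
        have haF : |LF x (x - xb)| ≤ (MF + ρF δ) * δ := by
          have h1 := (LF x).le_opNorm (x - xb)
          rw [Real.norm_eq_abs] at h1
          nlinarith [norm_nonneg (LF x), norm_nonneg (x - xb), hρF0 δ]
        have haG : |LG x (x - xb)| ≤ (MG + ρG δ) * δ := by
          have h1 := (LG x).le_opNorm (x - xb)
          rw [Real.norm_eq_abs] at h1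
          nlinarith [norm_nonneg (LG x), norm_nonneg (x - xb), hρG0 δ]
        have hbF : |LF x (x - xb) + hFh x| ≤ δ * (MF + 2 * ρF δ) := by
          have h2 := abs_add_le (LF x (x - xb)) (hFh x)
          nlinarith
        have hbG : |LG x (x - xb) + hGh x| ≤ δ * (MG + 2 * ρG δ) := by
          have h2 := abs_add_le (LG x (x - xb)) (hGh x)
          nlinarith
        have hprod : |(LF x (x - xb) + hFh x) * (LG x (x - xb) + hGh x)| ≤
            (δ * (MF + 2 * ρF δ)) * (δ * (MG + 2 * ρG δ)) := by
          rw [abs_mul]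
          exact mul_le_mul hbF hbG (abs_nonneg _)
            (mul_nonneg hδ0.le (by nlinarith [hρF0 δ]))
        have htri : |ybF * hGh x + ybG * hFh x +
            (LF x (x - xb) + hFh x) * (LG x (x - xb) + hGh x)| ≤
            |ybF| * |hGh x| + |ybG| * |hFh x| +
            |(LF x (x - xb) + hFh x) * (LG x (x - xb) + hGh x)| := by
          calc _ ≤ |ybF * hGh x + ybG * hFh x| +
              |(LF x (x - xb) + hFh x) * (LG x (x - xb) + hGh x)| := abs_add_le _ _
            _ ≤ _ := by
              have := abs_add_le (ybF * hGh x) (ybG * hFh x)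
              rw [abs_mul, abs_mul] at this
              linarith
        simp only [hρdef]
        rw [hmaxδ]
        have e1 : |ybF| * |hGh x| ≤ |ybF| * (δ * ρG δ) :=
          mul_le_mul_of_nonneg_left hhG (abs_nonneg _)
        have e2 : |ybG| * |hFh x| ≤ |ybG| * (δ * ρF δ) :=
          mul_le_mul_of_nonneg_left hhF (abs_nonneg _)
        nlinarith [hρF0 δ, hρG0 δ, hδ0.le, sq_nonneg δ, abs_nonneg ybF, abs_nonneg ybG,
          mul_nonneg hδ0.le hδ0.le]
      · -- membership
        obtain ⟨y₁, hy₁, y₂, hy₂, hye⟩ := hpmem x hx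
        exact ⟨y₁, hy₁, y₂, hy₂, by rw [← hye]; ring⟩
  · -- Λ is empty
    have hΛe : {L | ∃ L₁ ∈ ΛF, ∃ L₂ ∈ ΛG, L = ybF • L₂ + ybG • L₁} =
        (∅ : Set (EuclideanSpace ℝ (Fin n) →L[ℝ] ℝ)) := by
      ext L
      simp only [mem_setOf_eq, mem_empty_iff_false, iff_false]
      rintro ⟨L₁, h₁, L₂, h₂, rfl⟩
      exact hne ⟨⟨L₁, h₁⟩, ⟨L₂, h₂⟩⟩
    by_cases hxb : xb ∈ ΓF ∩ ΓG
    · -- xb in the direction set: use the rank-one construction with a cutoff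
      have hxbD : xb ∈ D := ⟨mem_closedBall_self hδ0.le, hxb⟩
      have hpxb : |p xb| ≤ δ * (|ybF| * ρG δ + |ybG| * ρF δ) + (δ * ρF δ) * (δ * ρG δ) := by
        obtain ⟨-, hhF, -⟩ := hFprop xb (hDF xb hxbD)
        obtain ⟨-, hhG, -⟩ := hGprop xb (hDG xb hxbD)
        rw [Real.norm_eq_abs] at hhF hhG
        have hp0 : p xb = ybF * hGh xb + ybG * hFh xb + hFh xb * hGh xb := by
          simp only [hpdef, sub_self, map_zero]
          ring
        rw [hp0]
        have htri : |ybF * hGh xb + ybG * hFh xb + hFh xb * hGh xb| ≤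
            |ybF| * |hGh xb| + |ybG| * |hFh xb| + |hFh xb| * |hGh xb| := by
          calc _ ≤ |ybF * hGh xb + ybG * hFh xb| + |hFh xb * hGh xb| := abs_add_le _ _
            _ ≤ _ := by
              have h5 := abs_add_le (ybF * hGh xb) (ybG * hFh xb)
              rw [abs_mul, abs_mul] at h5
              rw [abs_mul]
              linarith
        nlinarith [abs_nonneg ybF, abs_nonneg ybG, abs_nonneg (hFh xb), abs_nonneg (hGh xb),
          hρF0 δ, hρG0 δ, hδ0.le]
      obtain ⟨r, hr0, hr⟩ := Metric.continuousWithinAt_iff.mp (hpc xb hxbD) (δ ^ 2)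
        (by positivity)
      set q : EuclideanSpace ℝ (Fin n) → ℝ :=
        fun x => (p x - p xb) * min 1 (‖x - xb‖ / r) with hqdef
      set hh : EuclideanSpace ℝ (Fin n) → ℝ :=
        fun x => p xb + (p x - p xb) * max 0 (1 - ‖x - xb‖ / r) with hhdef
      have hcut : Continuous fun x : EuclideanSpace ℝ (Fin n) => ‖x - xb‖ / r :=
        (continuous_norm.comp (continuous_id.sub continuous_const)).div_const r
      have hqc : ContinuousOn q D :=
        (hpc.sub continuousOn_const).mul
          ((continuous_const.min hcut).continuousOn)
      have hhc : ContinuousOn hh D :=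
        continuousOn_const.add ((hpc.sub continuousOn_const).mul
          ((continuous_const.max (continuous_const.sub hcut)).continuousOn))
      have hLc : ContinuousOn (rkAux q xb) D := by
        intro x₀ hx₀
        by_cases hx₀b : x₀ = xb
        · subst hx₀b
          have hb : ∀ x, ‖rkAux q x₀ x‖ ≤ |p x - p x₀| / r := by
            intro x
            by_cases hxx : x = x₀
            · subst hxx
              rw [rkAux_xb]
              simp only [norm_zero]
              positivity
            · rw [rkAux_norm q x₀ x hxx]
              have ht0 : 0 < ‖x - x₀‖ :=
                norm_pos_iff.mpr (sub_ne_zero.mpr hxx)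
              simp only [hqdef]
              rw [abs_mul, abs_of_nonneg
                (le_min zero_le_one (div_nonneg (norm_nonneg _) hr0.le))]
              calc |p x - p x₀| * min 1 (‖x - x₀‖ / r) / ‖x - x₀‖
                  ≤ |p x - p x₀| * (‖x - x₀‖ / r) / ‖x - x₀‖ := by
                    gcongr
                    exact min_le_right _ _
                _ = |p x - p x₀| / r := by
                    field_simp
          have ht : Tendsto (fun x => |p x - p x₀| / r) (nhdsWithin x₀ D) (nhds 0) := by
            have hpt : Tendsto p (nhdsWithin x₀ D) (nhds (p x₀)) := hpc x₀ hx₀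
            have hsub : Tendsto (fun x => p x - p x₀) (nhdsWithin x₀ D)
                (nhds (p x₀ - p x₀)) := hpt.sub tendsto_const_nhds
            rw [sub_self] at hsub
            have habs : Tendsto (fun x => |p x - p x₀|) (nhdsWithin x₀ D) (nhds 0) := by
              simpa using hsub.abs
            simpa using habs.div_const r
          have hsq := squeeze_zero_norm hb ht
          unfold ContinuousWithinAt
          rw [rkAux_xb]
          exact hsq
        · exact rkAux_contWithinAt_ne q D xb x₀ hqc hx₀ hx₀b
      refine ⟨rkAux q xb, hh, hLc.prodMk hhc, ?_⟩
      intro x hx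
      refine ⟨?_, ?_, ?_⟩
      · rw [hΛe, Metric.infDist_empty]
        exact hρδ0
      · rw [Real.norm_eq_abs]
        simp only [hhdef]
        have hmax0 : (0:ℝ) ≤ max 0 (1 - ‖x - xb‖ / r) := le_max_left _ _
        have hterm : |p x - p xb| * max 0 (1 - ‖x - xb‖ / r) ≤ δ ^ 2 := by
          by_cases hxr : dist x xb < r
          · have h1 := hr hx hxr
            rw [Real.dist_eq] at h1
            have hmax1 : max 0 (1 - ‖x - xb‖ / r) ≤ 1 :=
              max_le zero_le_one (by
                have : 0 ≤ ‖x - xb‖ / r := div_nonneg (norm_nonneg _) hr0.le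
                linarith)
            nlinarith [abs_nonneg (p x - p xb)]
          · push_neg at hxr
            have hge : (1:ℝ) ≤ ‖x - xb‖ / r := by
              rw [← dist_eq_norm]
              exact (one_le_div hr0).mpr hxr
            have hzero : max 0 (1 - ‖x - xb‖ / r) = 0 := max_eq_left (by linarith)
            rw [hzero, mul_zero]
            positivity
        have htri : |p xb + (p x - p xb) * max 0 (1 - ‖x - xb‖ / r)| ≤
            |p xb| + |p x - p xb| * max 0 (1 - ‖x - xb‖ / r) := by
          refine le_trans (abs_add_le _ _) ?_
          rw [abs_mul, abs_of_nonneg hmax0]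
        have hkey : ρF δ * ρG δ + 1 ≤ (MF + 2 * ρF δ + 1) * (MG + 2 * ρG δ + 1) := by
          nlinarith [hρF0 δ, hρG0 δ, hMF0, hMG0, mul_nonneg hMF0 hMG0,
            mul_nonneg (hρF0 δ) (hρG0 δ), mul_nonneg hMF0 (hρG0 δ), mul_nonneg (hρF0 δ) hMG0]
        have hkey2 : δ * δ * (ρF δ * ρG δ + 1) ≤
            δ * δ * ((MF + 2 * ρF δ + 1) * (MG + 2 * ρG δ + 1)) :=
          mul_le_mul_of_nonneg_left hkey (mul_nonneg hδ0.le hδ0.le)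
        have hsq : δ ^ 2 = δ * δ := sq δ
        simp only [hρdef]
        rw [hmaxδ]
        nlinarith [htri, hterm, hpxb]
      · obtain ⟨y₁, hy₁, y₂, hy₂, hye⟩ := hpmem x hx
        refine ⟨y₁, hy₁, y₂, hy₂, ?_⟩
        rw [← hye]
        by_cases hxx : x = xb
        · subst hxx
          rw [rkAux_xb]
          simp only [hhdef, ContinuousLinearMap.zero_apply, sub_self, zero_mul, add_zero]
        · rw [rkAux_apply q xb x hxx]
          simp only [hqdef, hhdef]
          have hmm := minmax_aux (‖x - xb‖ / r)
          linear_combination (p x - p xb) * hmm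
    · -- xb not in the direction set
      have hDne : ∀ x ∈ D, x ≠ xb := fun x hx hxe => hxb (hxe ▸ hx.2)
      refine ⟨rkAux p xb, fun _ => (0:ℝ), ?_, ?_⟩
      · refine ContinuousOn.prodMk ?_ continuousOn_const
        intro x₀ hx₀
        exact rkAux_contWithinAt_ne p D xb x₀ hpc hx₀ (hDne x₀ hx₀)
      · intro x hx
        refine ⟨by rw [hΛe, Metric.infDist_empty]; exact hρδ0, ?_, ?_⟩
        · simpa using mul_nonneg hδ0.le hρδ0
        · obtain ⟨y₁, hy₁, y₂, hy₂, hye⟩ := hpmem x hx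
          refine ⟨y₁, hy₁, y₂, hy₂, ?_⟩
          rw [rkAux_apply p xb x (hDne x hx), add_zero, ← hye]
end

section
/- Characterization of transversality of convex cones: let E be a finite-dimensional real vector space and K₁, K₂ ⊆ E convex cones. Then K₁ and K₂ are transversal (i.e. K₁ − K₂ = E) if and only if either they are strongly transversal (i.e. transversal and K₁ ∩ K₂ ⊋ {0}) or they are complementary linear subspaces of E (i.e. K₁ and K₂ are linear subspaces with K₁ + K₂ = E and K₁ ∩ K₂ = {0}). -/
/-- A convex cone: a convex set closed under multiplication by nonnegative scalars. -/
def IsConvexCone {E : Type*} [AddCommGroup E] [Module ℝ E] (K : Set E) : Prop :=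
  Convex ℝ K ∧ ∀ a : ℝ, 0 ≤ a → ∀ k ∈ K, a • k ∈ K

lemma IsConvexCone.add_mem' {E : Type*} [AddCommGroup E] [Module ℝ E] {K : Set E}
    (h : IsConvexCone K) {x y : E} (hx : x ∈ K) (hy : y ∈ K) : x + y ∈ K := by
  have hmid := h.1 hx hy (by norm_num : (0:ℝ) ≤ 1/2) (by norm_num : (0:ℝ) ≤ 1/2)
    (by norm_num)
  have h2 := h.2 2 (by norm_num) _ hmid
  have : (2:ℝ) • ((1/2 : ℝ) • x + (1/2 : ℝ) • y) = x + y := by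
    rw [smul_add, smul_smul, smul_smul]; norm_num
  rwa [this] at h2

/-- Two convex cones are transversal iff they are strongly transversal
or complementary linear subspaces. -/
theorem transversal_iff_strongly_transversal_or_complementary
    {E : Type*} [AddCommGroup E] [Module ℝ E] [FiniteDimensional ℝ E]
    (K₁ K₂ : Set E) (h₁ : IsConvexCone K₁) (h₂ : IsConvexCone K₂) :
    {x | ∃ k₁ ∈ K₁, ∃ k₂ ∈ K₂, x = k₁ - k₂} = Set.univ ↔
      (({x | ∃ k₁ ∈ K₁, ∃ k₂ ∈ K₂, x = k₁ - k₂} = Set.univ ∧ ∃ v ∈ K₁ ∩ K₂, v ≠ 0) ∨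
        ((∃ S₁ : Submodule ℝ E, (S₁ : Set E) = K₁) ∧
         (∃ S₂ : Submodule ℝ E, (S₂ : Set E) = K₂) ∧
         {x | ∃ k₁ ∈ K₁, ∃ k₂ ∈ K₂, x = k₁ + k₂} = Set.univ ∧
         K₁ ∩ K₂ = {0})) := by
  constructor
  · intro htr
    have hmem : ∀ x : E, ∃ k₁ ∈ K₁, ∃ k₂ ∈ K₂, x = k₁ - k₂ := fun x => by
      have : x ∈ {x | ∃ k₁ ∈ K₁, ∃ k₂ ∈ K₂, x = k₁ - k₂} := htr ▸ Set.mem_univ x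
      exact this
    obtain ⟨a, ha, b, hb, -⟩ := hmem 0
    have h01 : (0:E) ∈ K₁ := by simpa using h₁.2 0 le_rfl a ha
    have h02 : (0:E) ∈ K₂ := by simpa using h₂.2 0 le_rfl b hb
    by_cases hv : ∃ v ∈ K₁ ∩ K₂, v ≠ 0
    · exact Or.inl ⟨htr, hv⟩
    · right
      have hinter : K₁ ∩ K₂ = {0} := by
        ext x
        simp only [Set.mem_singleton_iff]
        constructor
        · intro hx
          by_contra hne
          exact hv ⟨x, hx, hne⟩
        · rintro rfl
          exact ⟨h01, h02⟩
      -- K₁ is closed under negation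
      have hneg1 : ∀ x ∈ K₁, -x ∈ K₁ := by
        intro x hx
        obtain ⟨k₁, hk₁, k₂, hk₂, heq⟩ := hmem (-x)
        have hk2' : k₂ = k₁ + x := by
          have : k₁ - k₂ = -x := heq.symm
          linear_combination (norm := module) -this
        have hk2K1 : k₂ ∈ K₁ := hk2' ▸ h₁.add_mem' hk₁ hx
        have : k₂ = 0 := by
          have : k₂ ∈ K₁ ∩ K₂ := ⟨hk2K1, hk₂⟩
          rwa [hinter] at this
        rw [this] at hk2'
        have : k₁ = -x := by linear_combination (norm := module) -hk2'
        rwa [← this]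
      -- K₂ is closed under negation
      have hneg2 : ∀ y ∈ K₂, -y ∈ K₂ := by
        intro y hy
        obtain ⟨k₁, hk₁, k₂, hk₂, heq⟩ := hmem y
        have hk1' : k₁ = y + k₂ := by rw [heq]; abel
        have hk1K2 : k₁ ∈ K₂ := hk1' ▸ h₂.add_mem' hy hk₂
        have hk10 : k₁ = 0 := by
          have : k₁ ∈ K₁ ∩ K₂ := ⟨hk₁, hk1K2⟩
          rwa [hinter] at this
        rw [hk10] at hk1'
        have : k₂ = -y := by linear_combination (norm := module) -hk1'
        rwa [← this]
      have smul1 : ∀ (c : ℝ), ∀ x ∈ K₁, c • x ∈ K₁ := by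
        intro c x hx
        rcases le_or_gt 0 c with hc | hc
        · exact h₁.2 c hc x hx
        · have : c • x = (-c) • (-x) := by module
          rw [this]
          exact h₁.2 (-c) (by linarith) _ (hneg1 x hx)
      have smul2 : ∀ (c : ℝ), ∀ x ∈ K₂, c • x ∈ K₂ := by
        intro c x hx
        rcases le_or_gt 0 c with hc | hc
        · exact h₂.2 c hc x hx
        · have : c • x = (-c) • (-x) := by module
          rw [this]
          exact h₂.2 (-c) (by linarith) _ (hneg2 x hx)
      refine ⟨⟨⟨⟨⟨K₁, fun {a b} ha hb => h₁.add_mem' ha hb⟩, h01⟩,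
          fun {c x} hx => smul1 c x hx⟩, rfl⟩,
        ⟨⟨⟨⟨K₂, fun {a b} ha hb => h₂.add_mem' ha hb⟩, h02⟩,
          fun {c x} hx => smul2 c x hx⟩, rfl⟩, ?_, hinter⟩
      ext x
      simp only [Set.mem_univ, iff_true, Set.mem_setOf_eq]
      obtain ⟨k₁, hk₁, k₂, hk₂, heq⟩ := hmem x
      exact ⟨k₁, hk₁, -k₂, hneg2 k₂ hk₂, by rw [heq]; abel⟩
  · rintro (⟨htr, -⟩ | ⟨-, ⟨S₂, hS₂⟩, hsum, -⟩)
    · exact htr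
    · ext x
      simp only [Set.mem_univ, iff_true, Set.mem_setOf_eq]
      have : x ∈ {x | ∃ k₁ ∈ K₁, ∃ k₂ ∈ K₂, x = k₁ + k₂} := hsum ▸ Set.mem_univ x
      obtain ⟨k₁, hk₁, k₂, hk₂, heq⟩ := this
      have hnk₂ : -k₂ ∈ K₂ := by
        rw [← hS₂] at hk₂ ⊢
        exact S₂.neg_mem hk₂
      exact ⟨k₁, hk₁, -k₂, hnk₂, by rw [heq]; abel⟩
end

section
/- Clarke's generalized Jacobian is a QDQ: let Ω ⊆ ℝ^n be an open set, F : Ω → ℝ^m a Lipschitz continuous (single-valued) map, and x̄ ∈ Ω. Then Clarke's generalized Jacobian ∂_C F(x̄) — the closed convex hull of the set of all limits lim_{k→∞} DF(x_k) over sequences (x_k) of differentiability points of F converging to x̄ — is a Quasi Differential Quotient of F (regarded as the set-valued map x ⇝ {F(x)}) at (x̄, F(x̄)) in the direction of ℝ^n. -/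
open Metric Set Filter Topology

open MeasureTheory ContinuousLinearMap
open scoped Convolution NNReal ENNReal

/-- convexity of sublevel sets of infDist to a convex set -/
lemma aux_convex_infDist_sublevel {Y : Type*} [NormedAddCommGroup Y] [NormedSpace ℝ Y]
    {Λ : Set Y} (hΛ : Convex ℝ Λ) (c : ℝ) : Convex ℝ {A | infDist A Λ ≤ c} := by
  rcases Λ.eq_empty_or_nonempty with rfl | hne
  · simp only [infDist_empty]
    rcases le_or_gt 0 c with h | h
    · convert convex_univ (𝕜 := ℝ) (E := Y); ext A; simpa using h
    · convert convex_empty (𝕜 := ℝ) (E := Y); ext A; simpa using not_le.2 h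
  · intro A hA B hB a b ha hb hab
    simp only [mem_setOf_eq] at hA hB ⊢
    refine le_of_forall_pos_le_add fun ε hε => ?_
    have hA' : infDist A Λ < infDist A Λ + ε := by linarith
    have hB' : infDist B Λ < infDist B Λ + ε := by linarith
    obtain ⟨A', hA', hdA⟩ := (infDist_lt_iff hne).1 hA'
    obtain ⟨B', hB', hdB⟩ := (infDist_lt_iff hne).1 hB'
    have hmem : a • A' + b • B' ∈ Λ := hΛ hA' hB' ha hb hab
    have h1 : infDist (a • A + b • B) Λ ≤ dist (a • A + b • B) (a • A' + b • B') :=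
      infDist_le_dist_of_mem hmem
    have h2 : dist (a • A + b • B) (a • A' + b • B') ≤ a * dist A A' + b * dist B B' := by
      rw [dist_eq_norm, dist_eq_norm, dist_eq_norm]
      calc ‖a • A + b • B - (a • A' + b • B')‖ = ‖a • (A - A') + b • (B - B')‖ := by
            rw [smul_sub, smul_sub]; abel_nf
        _ ≤ ‖a • (A - A')‖ + ‖b • (B - B')‖ := norm_add_le _ _
        _ = a * ‖A - A'‖ + b * ‖B - B'‖ := by
            rw [norm_smul, norm_smul, Real.norm_eq_abs, Real.norm_eq_abs,
              abs_of_nonneg ha, abs_of_nonneg hb]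
    nlinarith [infDist_nonneg (x := A) (s := Λ), infDist_nonneg (x := B) (s := Λ),
      dist_nonneg (x := A) (y := A'), dist_nonneg (x := B) (y := B')]

/-- Jensen-type: a weighted average with continuous probability density lies in any
closed convex set containing the a.e. values on the support of the density. -/
lemma aux_integral_smul_mem {E : Type*} [NormedAddCommGroup E] [NormedSpace ℝ E]
    [MeasurableSpace E] [BorelSpace E] (μ : Measure E)
    {Y : Type*} [NormedAddCommGroup Y] [NormedSpace ℝ Y] [CompleteSpace Y]
    {ψ : E → ℝ} (hψc : Continuous ψ) (hψnn : ∀ z, 0 ≤ ψ z) (hψi : Integrable ψ μ)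
    (hψ1 : ∫ z, ψ z ∂μ = 1)
    {f : E → Y} (hfm : AEStronglyMeasurable f μ) {B : ℝ} (hbd : ∀ z, ‖f z‖ ≤ B)
    {C : Set Y} (hC : Convex ℝ C) (hCc : IsClosed C)
    (hmem : ∀ᵐ z ∂μ, z ∈ Function.support ψ → f z ∈ C) :
    (∫ z, ψ z • f z ∂μ) ∈ C := by
  set ν : Measure E := μ.withDensity (fun z => ENNReal.ofReal (ψ z)) with hν
  have hdm : Measurable fun z => ENNReal.ofReal (ψ z) := hψc.measurable.ennreal_ofReal
  have hprob : IsProbabilityMeasure ν := by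
    constructor
    rw [hν, withDensity_apply _ MeasurableSet.univ, setLIntegral_univ]
    rw [← ofReal_integral_eq_lintegral_ofReal hψi (Eventually.of_forall hψnn), hψ1]
    simp
  have hac : ν ≪ μ := withDensity_absolutelyContinuous _ _
  -- a.e. (ν) z is in support ψ
  have hsupp : ∀ᵐ z ∂ν, z ∈ Function.support ψ := by
    have hopen : MeasurableSet (Function.support ψ) := by
      have : Function.support ψ = ψ ⁻¹' ({0}ᶜ) := rfl
      rw [this]
      exact hψc.measurable (measurableSet_singleton 0).compl
    rw [MeasureTheory.ae_iff]
    have : {z | ¬ z ∈ Function.support ψ} = (Function.support ψ)ᶜ := rfl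
    rw [this, hν, withDensity_apply _ hopen.compl]
    have : ∀ z ∈ (Function.support ψ)ᶜ, ENNReal.ofReal (ψ z) = 0 := by
      intro z hz
      simp only [mem_compl_iff, Function.mem_support, not_not] at hz
      simp [hz]
    calc ∫⁻ z in (Function.support ψ)ᶜ, ENNReal.ofReal (ψ z) ∂μ
        = ∫⁻ z in (Function.support ψ)ᶜ, 0 ∂μ := setLIntegral_congr_fun hopen.compl
          this
      _ = 0 := lintegral_zero
  have hmem' : ∀ᵐ z ∂ν, f z ∈ C := by
    filter_upwards [hsupp, hac.ae_le hmem] with z h1 h2 using h2 h1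
  have hfi : Integrable f ν := by
    refine Integrable.mono' (integrable_const B) (hfm.mono_ac hac) ?_
    exact Eventually.of_forall hbd
  have hkey : (∫ z, f z ∂ν) ∈ C := hC.integral_mem hCc hmem' hfi
  have heq : ∫ z, f z ∂ν = ∫ z, ψ z • f z ∂μ := by
    rw [hν]
    rw [show (fun z => ENNReal.ofReal (ψ z)) = (fun z => ((Real.toNNReal (ψ z) : ℝ≥0) : ℝ≥0∞)) from rfl]
    rw [integral_withDensity_eq_integral_smul (hψc.measurable.real_toNNReal)]
    exact integral_congr_ae (Eventually.of_forall fun z => by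
      show (ψ z).toNNReal • f z = ψ z • f z
      rw [NNReal.smul_def, Real.coe_toNNReal _ (hψnn z)])
  rwa [heq] at hkey

/-- derivative along a line through `w` in direction `v` -/
lemma aux_line_deriv {E F : Type*} [NormedAddCommGroup E] [NormedSpace ℝ E]
    [NormedAddCommGroup F] [NormedSpace ℝ F]
    {f : E → F} {w v : E} {t₀ : ℝ} (hf : DifferentiableAt ℝ f (w + t₀ • v)) :
    HasDerivAt (fun t : ℝ => f (w + t • v)) (fderiv ℝ f (w + t₀ • v) v) t₀ := by
  have hc : HasDerivAt (fun t : ℝ => w + t • v) v t₀ := by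
    simpa using ((hasDerivAt_id t₀).smul_const v).const_add w
  simpa [Function.comp_def] using hf.hasFDerivAt.comp_hasDerivAt t₀ hc

section Conv

variable {n m : ℕ}
  {G : EuclideanSpace ℝ (Fin n) → EuclideanSpace ℝ (Fin m)} {K' : ℝ≥0}
  (hG : LipschitzWith K' G)
  (φ : ContDiffBump (0 : EuclideanSpace ℝ (Fin n)))

include hG in
lemma aux_fderiv_norm_le (y : EuclideanSpace ℝ (Fin n)) : ‖fderiv ℝ G y‖ ≤ K' := by
  by_cases h : DifferentiableAt ℝ G y
  · exact h.hasFDerivAt.le_of_lipschitzOn Filter.univ_mem (lipschitzOnWith_univ.2 hG)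
  · rw [fderiv_zero_of_not_differentiableAt h]; simp

include hG in
lemma aux_conv_integrable (y : EuclideanSpace ℝ (Fin n)) :
    Integrable (fun z => φ.normed volume z • fderiv ℝ G (y - z)) volume := by
  have hψc : Continuous (φ.normed volume) := φ.continuous_normed
  have hm : AEStronglyMeasurable (fun z => φ.normed volume z • fderiv ℝ G (y - z)) volume := by
    apply AEStronglyMeasurable.smul hψc.aestronglyMeasurable
    exact ((measurable_fderiv ℝ G).comp (measurable_const.sub measurable_id)).aestronglyMeasurable
  refine Integrable.mono' ((φ.integrable_normed).mul_const (K' : ℝ)) hm ?_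
  refine Eventually.of_forall fun z => ?_
  show ‖φ.normed volume z • fderiv ℝ G (y - z)‖ ≤ φ.normed volume z * (K' : ℝ)
  rw [norm_smul (φ.normed volume z) (fderiv ℝ G (y - z)), Real.norm_eq_abs,
    abs_of_nonneg (φ.nonneg_normed z)]
  exact mul_le_mul_of_nonneg_left (aux_fderiv_norm_le hG _) (φ.nonneg_normed z)

include hG in
lemma aux_conv_fderiv (y : EuclideanSpace ℝ (Fin n)) :
    fderiv ℝ (convolution (φ.normed volume) G (lsmul ℝ ℝ) volume) y
      = ∫ z, φ.normed volume z • fderiv ℝ G (y - z) := by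
  set ψ := φ.normed volume with hψdef
  have hψc : Continuous ψ := φ.continuous_normed
  have hψs : HasCompactSupport ψ := φ.hasCompactSupport_normed
  have hGc : Continuous G := hG.continuous
  have hconv : ContDiff ℝ 1 (convolution ψ G (lsmul ℝ ℝ) volume) :=
    hψs.contDiff_convolution_left _ φ.contDiff_normed hGc.locallyIntegrable
  have hI : ∀ x : EuclideanSpace ℝ (Fin n), Integrable (fun z => ψ z • G (x - z)) volume := fun x => by
    apply Continuous.integrable_of_hasCompactSupport
    · exact hψc.smul (hGc.comp (continuous_const.sub continuous_id))
    · exact hψs.smul_right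
  have hTint := aux_conv_integrable hG φ y
  refine ContinuousLinearMap.ext fun v => ?_
  -- difference quotient of the convolution
  have hd : DifferentiableAt ℝ (convolution ψ G (lsmul ℝ ℝ) volume) y :=
    (hconv.differentiable one_ne_zero).differentiableAt
  have hD := aux_line_deriv (t₀ := 0) (w := y) (v := v) (by simpa using hd)
  rw [show y + (0:ℝ) • v = y by simp] at hD
  have hslope := hasDerivAt_iff_tendsto_slope.mp hD
  -- the limit via dominated convergence
  have key : Tendsto (fun t : ℝ => slope (fun t : ℝ =>
        convolution ψ G (lsmul ℝ ℝ) volume (y + t • v)) 0 t)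
      (𝓝[≠] (0:ℝ)) (𝓝 (∫ z, ψ z • (fderiv ℝ G (y - z) v))) := by
    have heq : ∀ᶠ t in 𝓝[≠] (0:ℝ),
        slope (fun t : ℝ => convolution ψ G (lsmul ℝ ℝ) volume (y + t • v)) 0 t
          = ∫ z, ψ z • ((t⁻¹ : ℝ) • (G (y + t • v - z) - G (y - z))) := by
      filter_upwards [self_mem_nhdsWithin] with t ht
      have ht' : (t : ℝ) ≠ 0 := ht
      rw [slope_def_module]
      simp only [sub_zero, zero_smul, add_zero]
      rw [convolution_def, convolution_def]
      simp only [lsmul_apply]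
      rw [← integral_sub (hI (y + t • v)) (hI y), ← integral_smul]
      congr 1; ext z
      rw [← smul_sub, smul_comm]
    rw [tendsto_congr' heq]
    apply tendsto_integral_filter_of_dominated_convergence
      (bound := fun z => ψ z * ((K' : ℝ) * ‖v‖))
    · filter_upwards with t
      apply AEStronglyMeasurable.smul hψc.aestronglyMeasurable
      apply AEStronglyMeasurable.const_smul'
      exact ((hGc.comp (continuous_const.sub continuous_id)).sub
        (hGc.comp (continuous_const.sub continuous_id))).aestronglyMeasurable
    · filter_upwards [self_mem_nhdsWithin] with t ht
      have ht' : (t : ℝ) ≠ 0 := ht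
      filter_upwards with z
      show ‖ψ z • (t⁻¹ • (G (y + t • v - z) - G (y - z)))‖ ≤ ψ z * ((K' : ℝ) * ‖v‖)
      rw [norm_smul (ψ z) (t⁻¹ • (G (y + t • v - z) - G (y - z))), Real.norm_eq_abs,
        abs_of_nonneg (φ.nonneg_normed z)]
      apply mul_le_mul_of_nonneg_left _ (φ.nonneg_normed z)
      rw [norm_smul (t⁻¹) (G (y + t • v - z) - G (y - z)), Real.norm_eq_abs, abs_inv]
      have hGd : ‖G (y + t • v - z) - G (y - z)‖ ≤ (K' : ℝ) * (|t| * ‖v‖) := by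
        have := hG.dist_le_mul (y + t • v - z) (y - z)
        rw [dist_eq_norm, dist_eq_norm] at this
        calc ‖G (y + t • v - z) - G (y - z)‖ ≤ (K' : ℝ) * ‖y + t • v - z - (y - z)‖ := this
          _ = (K' : ℝ) * (|t| * ‖v‖) := by
              congr 1
              rw [show y + t • v - z - (y - z) = t • v by abel]
              rw [norm_smul, Real.norm_eq_abs]
      calc |t|⁻¹ * ‖G (y + t • v - z) - G (y - z)‖ ≤ |t|⁻¹ * ((K' : ℝ) * (|t| * ‖v‖)) := by
            apply mul_le_mul_of_nonneg_left hGd (by positivity)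
        _ = (K' : ℝ) * ‖v‖ := by
            field_simp
    · exact (φ.integrable_normed).mul_const _
    · -- a.e. convergence
      have hae : ∀ᵐ z : EuclideanSpace ℝ (Fin n) ∂volume, DifferentiableAt ℝ G (y - z) :=
        (Measure.measurePreserving_sub_left volume y).quasiMeasurePreserving.ae
          hG.ae_differentiableAt
      filter_upwards [hae] with z hz
      have hD' := aux_line_deriv (t₀ := 0) (w := y - z) (v := v) (by simpa using hz)
      rw [show y - z + (0:ℝ) • v = y - z by simp] at hD'
      have hs := hasDerivAt_iff_tendsto_slope.mp hD'
      have : Tendsto (fun t : ℝ => ψ z • slope (fun t : ℝ => G (y - z + t • v)) 0 t)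
          (𝓝[≠] (0:ℝ)) (𝓝 (ψ z • (fderiv ℝ G (y - z) v))) := hs.const_smul _
      refine this.congr fun t => ?_
      show ψ z • slope (fun t : ℝ => G (y - z + t • v)) 0 t
          = ψ z • (t⁻¹ • (G (y + t • v - z) - G (y - z)))
      rw [slope_def_module]
      simp only [sub_zero, zero_smul, add_zero]
      rw [show y - z + t • v = y + t • v - z from by abel]
  have h1 : fderiv ℝ (convolution ψ G (lsmul ℝ ℝ) volume) y v
      = ∫ z, ψ z • (fderiv ℝ G (y - z) v) := tendsto_nhds_unique hslope key
  rw [ContinuousLinearMap.integral_apply hTint v, h1]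
  exact integral_congr_ae (Filter.Eventually.of_forall fun z => by
    show ψ z • (fderiv ℝ G (y - z)) v = (φ.normed volume z • fderiv ℝ G (y - z)) v
    rw [ContinuousLinearMap.smul_apply])

end Conv

lemma aux_extend {n m : ℕ} {Ω : Set (EuclideanSpace ℝ (Fin n))}
    {F : EuclideanSpace ℝ (Fin n) → EuclideanSpace ℝ (Fin m)} {K : NNReal}
    (hF : LipschitzOnWith K F Ω) :
    ∃ (G : EuclideanSpace ℝ (Fin n) → EuclideanSpace ℝ (Fin m)) (K' : NNReal),
      0 < K' ∧ LipschitzWith K' G ∧ Set.EqOn G F Ω := by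
  set e := (EuclideanSpace.equiv (Fin m) ℝ : EuclideanSpace ℝ (Fin m) ≃L[ℝ] (Fin m → ℝ))
  have h1 : LipschitzOnWith (‖(e : EuclideanSpace ℝ (Fin m) →L[ℝ] (Fin m → ℝ))‖₊ * K)
      (fun x => e (F x)) Ω :=
    (e.toContinuousLinearMap.lipschitz).comp_lipschitzOnWith hF
  obtain ⟨g, hg, hgF⟩ := h1.extend_pi
  refine ⟨fun x => e.symm (g x),
    ‖(e.symm : (Fin m → ℝ) →L[ℝ] EuclideanSpace ℝ (Fin m))‖₊
      * (‖(e : EuclideanSpace ℝ (Fin m) →L[ℝ] (Fin m → ℝ))‖₊ * K) + 1, ?_, ?_, ?_⟩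
  · exact lt_of_lt_of_le zero_lt_one le_add_self
  · exact ((e.symm.toContinuousLinearMap.lipschitz).comp hg).weaken le_self_add
  · intro x hx
    have := hgF hx
    simp only at this ⊢
    rw [← this]
    exact e.symm_apply_apply (F x)

set_option maxHeartbeats 2000000

/-- Clarke's generalized Jacobian of a Lipschitz map is a QDQ. -/
theorem clarke_jacobian_isQDQ {n m : ℕ}
    (Ω : Set (EuclideanSpace ℝ (Fin n))) (hΩ : IsOpen Ω)
    (F : EuclideanSpace ℝ (Fin n) → EuclideanSpace ℝ (Fin m))
    (K : NNReal) (hF : LipschitzOnWith K F Ω)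
    (xb : EuclideanSpace ℝ (Fin n)) (hxb : xb ∈ Ω) :
    IsQDQ (fun x => {F x}) xb (F xb) Set.univ
      (closure (convexHull ℝ
        {L : EuclideanSpace ℝ (Fin n) →L[ℝ] EuclideanSpace ℝ (Fin m) |
          ∃ u : ℕ → EuclideanSpace ℝ (Fin n),
            (∀ k, u k ∈ Ω ∧ DifferentiableAt ℝ F (u k)) ∧
            Filter.Tendsto u Filter.atTop (nhds xb) ∧
            Filter.Tendsto (fun k => fderiv ℝ F (u k)) Filter.atTop (nhds L)})) := by

  classical
  set S : Set (EuclideanSpace ℝ (Fin n) →L[ℝ] EuclideanSpace ℝ (Fin m)) :=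
    {L : EuclideanSpace ℝ (Fin n) →L[ℝ] EuclideanSpace ℝ (Fin m) |
          ∃ u : ℕ → EuclideanSpace ℝ (Fin n),
            (∀ k, u k ∈ Ω ∧ DifferentiableAt ℝ F (u k)) ∧
            Filter.Tendsto u Filter.atTop (nhds xb) ∧
            Filter.Tendsto (fun k => fderiv ℝ F (u k)) Filter.atTop (nhds L)} with hSdef
  set Λ : Set (EuclideanSpace ℝ (Fin n) →L[ℝ] EuclideanSpace ℝ (Fin m)) :=
    closure (convexHull ℝ S) with hΛdef
  obtain ⟨G, K', hK'pos, hG, hGF⟩ := aux_extend hF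
  haveI : ProperSpace (EuclideanSpace ℝ (Fin n) →L[ℝ] EuclideanSpace ℝ (Fin m)) :=
    FiniteDimensional.proper ℝ _
  -- Λ is compact
  have hSsub : S ⊆ Metric.closedBall 0 (K : ℝ) := by
    rintro A ⟨u, hu, hutend, hAtend⟩
    refine Metric.isClosed_closedBall.mem_of_tendsto hAtend (Eventually.of_forall fun k => ?_)
    rw [mem_closedBall_zero_iff]
    exact norm_fderiv_le_of_lipschitzOn ℝ (hΩ.mem_nhds (hu k).1) hF
  have hΛsub : Λ ⊆ Metric.closedBall 0 (K : ℝ) := by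
    rw [hΛdef]
    exact closure_minimal (convexHull_min hSsub (convex_closedBall _ _)) Metric.isClosed_closedBall
  have hcomp : IsCompact Λ :=
    (isCompact_closedBall _ _).of_isClosed_subset isClosed_closure hΛsub
  have hΛconv : Convex ℝ Λ := (convex_convexHull ℝ S).closure
  -- upper semicontinuity of the distance of nearby gradients to Λ
  obtain ⟨r₁, hr₁pos, hr₁sub⟩ : ∃ r₁ > 0, Metric.closedBall xb (3 * r₁) ⊆ Ω := by
    obtain ⟨e, he, hesub⟩ := Metric.isOpen_iff.1 hΩ xb hxb
    refine ⟨e / 4, by positivity, fun y hy => hesub ?_⟩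
    rw [Metric.mem_closedBall] at hy
    rw [Metric.mem_ball]
    calc dist y xb ≤ 3 * (e / 4) := hy
      _ < e := by linarith
  have husc : ∀ c > 0, ∃ r > 0, ∀ a ∈ Metric.closedBall xb r,
      DifferentiableAt ℝ G a → Metric.infDist (fderiv ℝ G a) Λ ≤ c := by
    intro c hc
    by_contra hcon
    push_neg at hcon
    have hseq : ∀ k : ℕ, ∃ a, a ∈ Metric.closedBall xb (min r₁ (1 / (k + 1))) ∧
        DifferentiableAt ℝ G a ∧ c < Metric.infDist (fderiv ℝ G a) Λ := by
      intro k
      obtain ⟨a, ha, hd, hgt⟩ := hcon (min r₁ (1 / (k + 1))) (by positivity)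
      exact ⟨a, ha, hd, hgt⟩
    choose a ha hdiff hlt using hseq
    have hmemΩ : ∀ k, a k ∈ Ω := by
      intro k
      apply hr₁sub
      have := ha k
      rw [Metric.mem_closedBall] at this ⊢
      calc dist (a k) xb ≤ min r₁ (1 / (k + 1)) := this
        _ ≤ r₁ := min_le_left _ _
        _ ≤ 3 * r₁ := by linarith
    have htend : Filter.Tendsto a Filter.atTop (nhds xb) := by
      rw [tendsto_iff_dist_tendsto_zero]
      apply squeeze_zero (fun k => dist_nonneg)
        (fun k => le_trans (Metric.mem_closedBall.1 (ha k)) (min_le_right _ _))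
      exact tendsto_one_div_add_atTop_nhds_zero_nat
    have hbdd : ∀ k, fderiv ℝ G (a k) ∈
        Metric.closedBall (0 : EuclideanSpace ℝ (Fin n) →L[ℝ] EuclideanSpace ℝ (Fin m)) (K' : ℝ) :=
      fun k => mem_closedBall_zero_iff.2 (aux_fderiv_norm_le hG _)
    obtain ⟨L₀, _, θ, hθ, hθtend⟩ := (isCompact_closedBall _ _).tendsto_subseq hbdd
    have heqGF : ∀ k, fderiv ℝ G (a k) = fderiv ℝ F (a k) := by
      intro k
      exact Filter.EventuallyEq.fderiv_eq
        (Filter.eventuallyEq_of_mem (hΩ.mem_nhds (hmemΩ k)) hGF)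
    have hdiffF : ∀ k, DifferentiableAt ℝ F (a k) := by
      intro k
      apply (hdiff k).congr_of_eventuallyEq
      exact (Filter.eventuallyEq_of_mem (hΩ.mem_nhds (hmemΩ k)) hGF).symm
    have hL₀S : L₀ ∈ S := by
      refine ⟨a ∘ θ, fun k => ⟨hmemΩ _, hdiffF _⟩, htend.comp hθ.tendsto_atTop, ?_⟩
      have : (fun k => fderiv ℝ F ((a ∘ θ) k)) = (fun k => fderiv ℝ G (a (θ k))) := by
        funext k; exact (heqGF (θ k)).symm
      rw [this]
      exact hθtend
    have hL₀Λ : L₀ ∈ Λ := subset_closure (subset_convexHull ℝ S hL₀S)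
    have htend2 : Filter.Tendsto (fun k => Metric.infDist (fderiv ℝ G (a (θ k))) Λ)
        Filter.atTop (nhds (Metric.infDist L₀ Λ)) :=
      ((lipschitz_infDist_pt Λ).continuous.tendsto L₀).comp hθtend
    rw [Metric.infDist_zero_of_mem hL₀Λ] at htend2
    have hge := ge_of_tendsto htend2 (Eventually.of_forall fun k => (hlt (θ k)).le)
    linarith
  -- the modulus built from a sup
  set σ : ℝ → ℝ := fun r => sSup ({0} ∪ ((fun a => Metric.infDist (fderiv ℝ G a) Λ) ''
    {a | a ∈ Metric.closedBall xb r ∧ DifferentiableAt ℝ G a})) with hσdef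
  have hBdd : ∀ r : ℝ, BddAbove ({0} ∪ ((fun a => Metric.infDist (fderiv ℝ G a) Λ) ''
      {a | a ∈ Metric.closedBall xb r ∧ DifferentiableAt ℝ G a})) := by
    intro r
    refine ⟨Metric.infDist 0 Λ + (K' : ℝ), ?_⟩
    rintro x (rfl | ⟨b, _, rfl⟩)
    · have h1 : (0:ℝ) ≤ Metric.infDist 0 Λ := Metric.infDist_nonneg
      have h2 : (0:ℝ) ≤ (K' : ℝ) := K'.coe_nonneg
      linarith
    · calc Metric.infDist (fderiv ℝ G b) Λ
          ≤ Metric.infDist 0 Λ + dist (fderiv ℝ G b) 0 := Metric.infDist_le_infDist_add_dist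
        _ ≤ Metric.infDist 0 Λ + (K' : ℝ) := by
            have := aux_fderiv_norm_le hG (G := G) b
            rw [dist_zero_right]
            linarith
  have hσ0 : ∀ r, 0 ≤ σ r := fun r => le_csSup (hBdd r) (mem_union_left _ rfl)
  have hσmono : Monotone σ := by
    intro r r' hrr'
    simp only [hσdef]
    exact csSup_le_csSup (hBdd r') ⟨0, Set.mem_union_left _ rfl⟩
      (Set.union_subset_union_right _ (Set.image_mono
        (fun b hb => ⟨Metric.closedBall_subset_closedBall hrr' hb.1, hb.2⟩)))
  have hσle : ∀ (b : EuclideanSpace ℝ (Fin n)) (r : ℝ), b ∈ Metric.closedBall xb r →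
      DifferentiableAt ℝ G b → Metric.infDist (fderiv ℝ G b) Λ ≤ σ r := by
    intro b r h1 h2
    exact le_csSup (hBdd r) (mem_union_right _ ⟨b, ⟨h1, h2⟩, rfl⟩)
  have hσsmall : ∀ c > 0, ∃ r > 0, σ r ≤ c := by
    intro c hc
    obtain ⟨r, hrpos, hr⟩ := husc c hc
    refine ⟨r, hrpos, ?_⟩
    apply Real.sSup_le _ hc.le
    rintro x (rfl | ⟨b, ⟨hb1, hb2⟩, rfl⟩)
    · exact hc.le
    · exact hr b hb1 hb2
  -- the modulus
  set ρ : ℝ → ℝ := fun δ => σ (2 * δ) + (2 * (K' : ℝ) + 1) * max δ 0 with hρdef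
  have hρmod : IsModulus ρ := by
    refine ⟨fun δ => ?_, ?_, ?_⟩
    · have h1 := hσ0 (2 * δ)
      have h2 : (0:ℝ) ≤ (2 * (K' : ℝ) + 1) * max δ 0 := by positivity
      simp only [hρdef]
      linarith
    · apply Monotone.monotoneOn
      apply Monotone.add
      · exact hσmono.comp (fun x y hxy => by linarith)
      · exact Monotone.const_mul (monotone_id.max monotone_const) (by positivity)
    · rw [Metric.tendsto_nhdsWithin_nhds]
      intro e he
      obtain ⟨r, hrpos, hrle⟩ := hσsmall (e / 2) (by linarith)
      refine ⟨min (r / 2) (e / (2 * (2 * (K' : ℝ) + 1))), by positivity, ?_⟩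
      intro δ hδ hdist
      rw [Real.dist_eq, sub_zero] at hdist
      have hδpos : (0:ℝ) < δ := hδ
      have habs : |δ| = δ := abs_of_pos hδpos
      rw [habs] at hdist
      have h1 : σ (2 * δ) ≤ e / 2 := by
        apply le_trans (hσmono _) hrle
        have := lt_of_lt_of_le hdist (min_le_left _ _)
        linarith
      have h2 : (2 * (K' : ℝ) + 1) * max δ 0 < e / 2 := by
        rw [max_eq_left hδpos.le]
        have hlt := lt_of_lt_of_le hdist (min_le_right _ _)
        have hpos : (0:ℝ) < 2 * (K' : ℝ) + 1 := by positivity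
        calc (2 * (K' : ℝ) + 1) * δ < (2 * (K' : ℝ) + 1) * (e / (2 * (2 * (K' : ℝ) + 1))) :=
              by exact mul_lt_mul_of_pos_left hlt hpos
          _ = e / 2 := by field_simp
      rw [Real.dist_eq, sub_zero]
      have hρnn : 0 ≤ ρ δ := by
        have := hσ0 (2 * δ); have : (0:ℝ) ≤ (2 * (K' : ℝ) + 1) * max δ 0 := by positivity
        simp only [hρdef]
        have := hσ0 (2 * δ)
        positivity
      rw [abs_of_nonneg hρnn]
      simp only [hρdef]
      linarith
  refine ⟨hcomp, min r₁ 1, by positivity, ρ, hρmod, ?_⟩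
  intro δ hδpos hδlt
  have hδ1 : δ < 1 := lt_of_lt_of_le hδlt (min_le_right _ _)
  have hδr₁ : δ < r₁ := lt_of_lt_of_le hδlt (min_le_left _ _)
  set ε : ℝ := δ ^ 2 with hεdef
  have hεpos : 0 < ε := by positivity
  have hεδ : ε ≤ δ := by nlinarith
  set φ : ContDiffBump (0 : EuclideanSpace ℝ (Fin n)) :=
    ⟨ε / 2, ε, by positivity, by linarith⟩ with hφdef
  have hφrOut : φ.rOut = ε := rfl
  set Gm : EuclideanSpace ℝ (Fin n) → EuclideanSpace ℝ (Fin m) :=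
    convolution (φ.normed volume) G (ContinuousLinearMap.lsmul ℝ ℝ) volume with hGmdef
  have hGmsm : ContDiff ℝ 1 Gm :=
    φ.hasCompactSupport_normed.contDiff_convolution_left _ φ.contDiff_normed
      hG.continuous.locallyIntegrable
  have hGmdiff : Differentiable ℝ Gm := hGmsm.differentiable one_ne_zero
  have hDGm : ∀ y, fderiv ℝ Gm y = ∫ z, φ.normed volume z • fderiv ℝ G (y - z) :=
    fun y => aux_conv_fderiv hG φ y
  have hDGmbd : ∀ y, ‖fderiv ℝ Gm y‖ ≤ (K' : ℝ) := by
    intro y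
    rw [hDGm y]
    calc ‖∫ z, φ.normed volume z • fderiv ℝ G (y - z)‖
        ≤ ∫ z, φ.normed volume z * (K' : ℝ) := by
          apply norm_integral_le_of_norm_le ((φ.integrable_normed).mul_const _)
          refine Eventually.of_forall fun z => ?_
          rw [norm_smul (φ.normed volume z) (fderiv ℝ G (y - z)), Real.norm_eq_abs,
            abs_of_nonneg (φ.nonneg_normed z)]
          exact mul_le_mul_of_nonneg_left (aux_fderiv_norm_le hG _) (φ.nonneg_normed z)
      _ = (K' : ℝ) := by rw [integral_mul_const, φ.integral_normed, one_mul]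
  have hGmclose : ∀ y, dist (Gm y) (G y) ≤ (K' : ℝ) * ε := by
    intro y
    apply φ.dist_normed_convolution_le hG.continuous.aestronglyMeasurable
    intro x hx
    rw [Metric.mem_ball, hφrOut] at hx
    calc dist (G x) (G y) ≤ (K' : ℝ) * dist x y := hG.dist_le_mul x y
      _ ≤ (K' : ℝ) * ε := mul_le_mul_of_nonneg_left hx.le K'.coe_nonneg
  have hDGmcont : Continuous (fderiv ℝ Gm) := hGmsm.continuous_fderiv one_ne_zero
  set C : Set (EuclideanSpace ℝ (Fin n) →L[ℝ] EuclideanSpace ℝ (Fin m)) :=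
    {A | Metric.infDist A Λ ≤ σ (2 * δ)} with hCdef
  have hCconv : Convex ℝ C := aux_convex_infDist_sublevel hΛconv _
  have hCclosed : IsClosed C :=
    isClosed_le (lipschitz_infDist_pt Λ).continuous continuous_const
  have hDGmC : ∀ y ∈ Metric.closedBall xb δ, fderiv ℝ Gm y ∈ C := by
    intro y hy
    rw [hDGm y]
    apply aux_integral_smul_mem volume φ.continuous_normed φ.nonneg_normed
      φ.integrable_normed φ.integral_normed
      (((measurable_fderiv ℝ G).comp (measurable_const.sub measurable_id)).aestronglyMeasurable)
      (fun z => aux_fderiv_norm_le hG _) hCconv hCclosed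
    have hae : ∀ᵐ z : EuclideanSpace ℝ (Fin n) ∂volume, DifferentiableAt ℝ G (y - z) :=
      (MeasureTheory.Measure.measurePreserving_sub_left volume y).quasiMeasurePreserving.ae
        hG.ae_differentiableAt
    filter_upwards [hae] with z hz hzsupp
    have hzball : ‖z‖ < ε := by
      have := φ.support_normed_eq (μ := volume) ▸ hzsupp
      rw [Metric.mem_ball, dist_zero_right] at this
      rwa [hφrOut] at this
    have hmem2δ : y - z ∈ Metric.closedBall xb (2 * δ) := by
      rw [Metric.mem_closedBall]
      calc dist (y - z) xb ≤ dist (y - z) y + dist y xb := dist_triangle _ _ _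
        _ ≤ ε + δ := by
            apply add_le_add _ (Metric.mem_closedBall.1 hy)
            rw [dist_eq_norm]
            simpa using hzball.le
        _ ≤ 2 * δ := by linarith
    exact hσle _ _ hmem2δ hz
  set L : EuclideanSpace ℝ (Fin n) → (EuclideanSpace ℝ (Fin n) →L[ℝ] EuclideanSpace ℝ (Fin m)) :=
    fun x => ∫ t in (0:ℝ)..1, fderiv ℝ Gm (xb + t • (x - xb)) with hLdef
  have hcurvecont : ∀ x : EuclideanSpace ℝ (Fin n),
      Continuous (fun t : ℝ => fderiv ℝ Gm (xb + t • (x - xb))) := by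
    intro x
    exact hDGmcont.comp (continuous_const.add ((continuous_id.smul continuous_const)))
  have hLcont : Continuous L := by
    apply intervalIntegral.continuous_of_dominated_interval (bound := fun _ => (K' : ℝ))
    · intro x
      exact (hcurvecont x).aestronglyMeasurable
    · intro x
      exact Eventually.of_forall fun t _ => hDGmbd _
    · exact intervalIntegrable_const
    · refine Eventually.of_forall fun t _ => ?_
      exact hDGmcont.comp (continuous_const.add ((continuous_id.sub continuous_const).const_smul t))
  have hIocint : ∀ x : EuclideanSpace ℝ (Fin n),
      IntegrableOn (fun t => fderiv ℝ Gm (xb + t • (x - xb))) (Ioc (0:ℝ) 1) volume :=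
    fun x => (hcurvecont x).integrableOn_Ioc
  haveI hIocprob : IsProbabilityMeasure (volume.restrict (Ioc (0:ℝ) 1)) := by
    constructor
    rw [Measure.restrict_apply_univ, Real.volume_Ioc]
    norm_num
  have hLC : ∀ x ∈ Metric.closedBall xb δ, L x ∈ C := by
    intro x hx
    have hrw : L x = ∫ t in Ioc (0:ℝ) 1, fderiv ℝ Gm (xb + t • (x - xb)) ∂volume := by
      rw [hLdef]
      exact intervalIntegral.integral_of_le zero_le_one
    rw [hrw]
    apply hCconv.integral_mem hCclosed
    · rw [ae_restrict_iff' measurableSet_Ioc]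
      refine Eventually.of_forall fun t ht => ?_
      apply hDGmC
      rw [Metric.mem_closedBall]
      have : dist (xb + t • (x - xb)) xb = ‖t • (x - xb)‖ := by
        rw [dist_eq_norm]; congr 1; abel
      rw [this, norm_smul, Real.norm_eq_abs, abs_of_pos ht.1]
      calc t * ‖x - xb‖ ≤ 1 * ‖x - xb‖ :=
            mul_le_mul_of_nonneg_right ht.2 (norm_nonneg _)
        _ = ‖x - xb‖ := one_mul _
        _ ≤ δ := by rw [← dist_eq_norm]; exact Metric.mem_closedBall.1 hx
    · exact hIocint x
  have hLapp : ∀ x : EuclideanSpace ℝ (Fin n), L x (x - xb) = Gm x - Gm xb := by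
    intro x
    have hcurve : ∀ t ∈ uIcc (0:ℝ) 1, HasDerivAt (fun t : ℝ => Gm (xb + t • (x - xb)))
        (fderiv ℝ Gm (xb + t • (x - xb)) (x - xb)) t :=
      fun t _ => aux_line_deriv (hGmdiff _)
    have hFTC := intervalIntegral.integral_eq_sub_of_hasDerivAt hcurve
      (((hcurvecont x).clm_apply continuous_const).intervalIntegrable 0 1)
    simp only [one_smul, zero_smul, add_zero] at hFTC
    have h2 : L x (x - xb) = ∫ t in Ioc (0:ℝ) 1, fderiv ℝ Gm (xb + t • (x - xb)) (x - xb) := by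
      have hrw : L x = ∫ t in Ioc (0:ℝ) 1, fderiv ℝ Gm (xb + t • (x - xb)) ∂volume := by
        rw [hLdef]
        exact intervalIntegral.integral_of_le zero_le_one
      rw [hrw, ContinuousLinearMap.integral_apply (hIocint x) (x - xb)]
    rw [h2, ← intervalIntegral.integral_of_le zero_le_one, hFTC]
    congr 1
    rw [show xb + (x - xb) = x by abel]
  set h : EuclideanSpace ℝ (Fin n) → EuclideanSpace ℝ (Fin m) :=
    fun x => F x - F xb - L x (x - xb) with hhdef
  have hballΩ : Metric.closedBall xb δ ⊆ Ω := fun y hy => by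
    apply hr₁sub
    rw [Metric.mem_closedBall] at hy ⊢
    calc dist y xb ≤ δ := hy
      _ ≤ 3 * r₁ := by linarith
  refine ⟨L, h, ?_, ?_⟩
  · apply ContinuousOn.prodMk hLcont.continuousOn
    have hFcont : ContinuousOn F (Metric.closedBall xb δ ∩ univ) := by
      apply (hF.continuousOn).mono
      rw [inter_univ]
      exact hballΩ
    apply ContinuousOn.sub (hFcont.sub continuousOn_const)
    exact (hLcont.clm_apply (continuous_id.sub continuous_const)).continuousOn
  · rintro x ⟨hx, -⟩
    have hxΩ : x ∈ Ω := hballΩ hx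
    have hρge : (2 * (K' : ℝ) + 1) * δ ≤ ρ δ := by
      have h1 := hσ0 (2 * δ)
      have : max δ 0 = δ := max_eq_left hδpos.le
      simp only [hρdef, this]
      linarith
    refine ⟨?_, ?_, ?_⟩
    · have h1 : Metric.infDist (L x) Λ ≤ σ (2 * δ) := hLC x hx
      have h2 : (0:ℝ) ≤ (2 * (K' : ℝ) + 1) * max δ 0 := by positivity
      simp only [hρdef]
      linarith
    · have hxval : h x = (G x - Gm x) - (G xb - Gm xb) := by
        simp only [hhdef]
        rw [hLapp x, ← hGF hxΩ, ← hGF hxb]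
        abel
      have hb1 : ‖G x - Gm x‖ ≤ (K' : ℝ) * ε := by
        rw [← dist_eq_norm, dist_comm]; exact hGmclose x
      have hb2 : ‖G xb - Gm xb‖ ≤ (K' : ℝ) * ε := by
        rw [← dist_eq_norm, dist_comm]; exact hGmclose xb
      calc ‖h x‖ ≤ ‖G x - Gm x‖ + ‖G xb - Gm xb‖ := by
            rw [hxval]; exact norm_sub_le _ _
        _ ≤ 2 * ((K' : ℝ) * ε) := by linarith
        _ = 2 * (K' : ℝ) * δ * δ := by rw [hεdef]; ring
        _ ≤ δ * ((2 * (K' : ℝ) + 1) * δ) := by nlinarith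
        _ ≤ δ * ρ δ := mul_le_mul_of_nonneg_left hρge hδpos.le
    · simp only [mem_singleton_iff, hhdef]
      abel
end

section
/- δ-independent sufficient condition for QDQ: let F : ℝ^n ⇝ ℝ^m be a set-valued map, (x̄, ȳ) ∈ ℝ^n × ℝ^m, Γ ⊆ ℝ^n, and Λ a compact set of linear maps from ℝ^n to ℝ^m. Suppose there exists a (δ-independent) continuous map (L, h) : Γ → Lin(ℝ^n, ℝ^m) × ℝ^m such that sup_{x ∈ (x̄+B_δ)∩Γ} dist(L(x), Λ) → 0 as δ → 0, sup_{x ∈ (x̄+B_δ)∩Γ} ‖h(x)‖ = o(δ) as δ → 0, and ȳ + L(x)(x − x̄) + h(x) ∈ F(x) for all x ∈ Γ. Then Λ is a Quasi Differential Quotient of F at (x̄, ȳ) in the direction of Γ. -/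
open Metric Set Filter Topology

/-- δ-independent sufficient condition for being a QDQ. -/
theorem qdq_of_delta_independent {n m : ℕ}
    (F : EuclideanSpace ℝ (Fin n) → Set (EuclideanSpace ℝ (Fin m)))
    (xb : EuclideanSpace ℝ (Fin n)) (yb : EuclideanSpace ℝ (Fin m))
    (Γ : Set (EuclideanSpace ℝ (Fin n)))
    (Λ : Set (EuclideanSpace ℝ (Fin n) →L[ℝ] EuclideanSpace ℝ (Fin m)))
    (hΛ : IsCompact Λ)
    (L : EuclideanSpace ℝ (Fin n) → (EuclideanSpace ℝ (Fin n) →L[ℝ] EuclideanSpace ℝ (Fin m)))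
    (h : EuclideanSpace ℝ (Fin n) → EuclideanSpace ℝ (Fin m))
    (hcont : ContinuousOn (fun x => (L x, h x)) Γ)
    (hLdist : ∀ ε > (0:ℝ), ∃ δ₀ > (0:ℝ),
      ∀ x ∈ Metric.closedBall xb δ₀ ∩ Γ, Metric.infDist (L x) Λ ≤ ε)
    (hho : ∀ ε > (0:ℝ), ∃ δ₀ > (0:ℝ), ∀ δ : ℝ, 0 < δ → δ ≤ δ₀ →
      ∀ x ∈ Metric.closedBall xb δ ∩ Γ, ‖h x‖ ≤ ε * δ)
    (hmem : ∀ x ∈ Γ, yb + (L x) (x - xb) + h x ∈ F x) :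
    IsQDQ F xb yb Γ Λ := by
  classical
  set S : ℝ → Set ℝ := fun δ =>
    {ε : ℝ | 0 ≤ ε ∧ ∀ δ' : ℝ, 0 < δ' → δ' ≤ δ →
      ∀ x ∈ Metric.closedBall xb δ' ∩ Γ,
        Metric.infDist (L x) Λ ≤ ε ∧ ‖h x‖ ≤ ε * δ'} with hS
  have key : ∀ ε : ℝ, 0 < ε → ∃ d > (0:ℝ), ∀ δ : ℝ, 0 < δ → δ ≤ d → ε ∈ S δ := by
    intro ε hε
    obtain ⟨δ₀, hδ₀, hL0⟩ := hLdist ε hε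
    obtain ⟨δ₁, hδ₁, hh1⟩ := hho ε hε
    refine ⟨min δ₀ δ₁, lt_min hδ₀ hδ₁, ?_⟩
    intro δ hδ hδd
    refine ⟨hε.le, ?_⟩
    intro δ' hδ' hδ'δ x hx
    have hx0 : x ∈ Metric.closedBall xb δ₀ ∩ Γ :=
      ⟨Metric.closedBall_subset_closedBall
        (hδ'δ.trans (hδd.trans (min_le_left _ _))) hx.1, hx.2⟩
    refine ⟨hL0 x hx0, hh1 δ' hδ'
      (hδ'δ.trans (hδd.trans (min_le_right _ _))) x hx⟩
  set ρ : ℝ → ℝ := fun δ => sInf (insert 1 (S δ)) with hρ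
  have hbdd : ∀ δ : ℝ, BddBelow (insert 1 (S δ)) := by
    intro δ
    refine ⟨0, ?_⟩
    rintro ε (rfl | hε)
    · norm_num
    · exact hε.1
  have hne : ∀ δ : ℝ, (insert 1 (S δ)).Nonempty := fun δ => ⟨1, Set.mem_insert _ _⟩
  have hρ0 : ∀ δ, 0 ≤ ρ δ := by
    intro δ
    refine le_csInf (hne δ) ?_
    rintro ε (rfl | hε)
    · norm_num
    · exact hε.1
  have hmono : MonotoneOn ρ (Set.Ici 0) := by
    intro a _ b _ hab
    refine csInf_le_csInf (hbdd a) (hne b) ?_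
    rintro ε (rfl | hε)
    · exact Set.mem_insert _ _
    · refine Set.mem_insert_of_mem _ ⟨hε.1, ?_⟩
      intro δ' hδ' hδ'a x hx
      exact hε.2 δ' hδ' (hδ'a.trans hab) x hx
  have htend : Filter.Tendsto ρ (nhdsWithin 0 (Set.Ioi 0)) (nhds 0) := by
    rw [Metric.tendsto_nhdsWithin_nhds]
    intro ε hε
    obtain ⟨d, hd, hdm⟩ := key (ε / 2) (by positivity)
    refine ⟨d, hd, ?_⟩
    intro δ hδ hdist
    have hδd : δ ≤ d := by
      have : |δ - 0| < d := by simpa [Real.dist_eq] using hdist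
      have := abs_lt.mp this
      linarith [this.2]
    have hle : ρ δ ≤ ε / 2 :=
      csInf_le (hbdd δ) (Set.mem_insert_of_mem _ (hdm δ hδ hδd))
    rw [Real.dist_eq, abs_of_nonneg (by simpa using hρ0 δ)]
    simp only [sub_zero]
    linarith [hρ0 δ]
  obtain ⟨δs, hδs, hδsm⟩ := key 1 one_pos
  refine ⟨hΛ, δs, hδs, ρ, ⟨hρ0, hmono, htend⟩, ?_⟩
  intro δ hδ hδδs
  have h1 : (1:ℝ) ∈ S δ := hδsm δ hδ hδδs.le
  refine ⟨L, h, hcont.mono Set.inter_subset_right, ?_⟩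
  intro x hx
  have hall : ∀ ε ∈ insert 1 (S δ),
      Metric.infDist (L x) Λ ≤ ε ∧ ‖h x‖ ≤ ε * δ := by
    rintro ε (rfl | hε)
    · exact h1.2 δ hδ le_rfl x hx
    · exact hε.2 δ hδ le_rfl x hx
  refine ⟨?_, ?_, hmem x hx.2⟩
  · exact le_csInf (hne δ) fun ε hε => (hall ε hε).1
  · have : ‖h x‖ / δ ≤ ρ δ := by
      refine le_csInf (hne δ) ?_
      intro ε hε
      rw [div_le_iff₀ hδ]
      simpa [mul_comm] using (hall ε hε).2
    calc ‖h x‖ = (‖h x‖ / δ) * δ := by field_simp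
    _ ≤ ρ δ * δ := by nlinarith [hρ0 δ]
    _ = δ * ρ δ := mul_comm _ _
end

section
/- Sufficiency for QDQs of curves with one-sided derivatives: let f : ℝ → ℝ^m be a continuous curve admitting a left derivative f'(t̄⁻) and a right derivative f'(t̄⁺) at a point t̄ ∈ ℝ. Then any compact set Λ ⊆ Lin(ℝ, ℝ^m) ≅ ℝ^m that contains the image of some continuous path γ : [−1, 1] → Λ with γ(−1) = f'(t̄⁻) and γ(1) = f'(t̄⁺) is a Quasi Differential Quotient of f (regarded as the set-valued map t ⇝ {f(t)}) at (t̄, f(t̄)) in the direction of ℝ. -/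
open Metric Set Filter Topology

/-- Sufficiency for QDQs of curves: any compact set of vectors containing a path
connecting the one-sided derivatives is a QDQ of the curve. -/
theorem curve_qdq_of_path {m : ℕ}
    (f : ℝ → EuclideanSpace ℝ (Fin m)) (hf : Continuous f) (tb : ℝ)
    (vminus vplus : EuclideanSpace ℝ (Fin m))
    (hminus : Filter.Tendsto (fun s : ℝ => s⁻¹ • (f (tb + s) - f tb))
      (nhdsWithin 0 (Set.Iio 0)) (nhds vminus))
    (hplus : Filter.Tendsto (fun s : ℝ => s⁻¹ • (f (tb + s) - f tb))
      (nhdsWithin 0 (Set.Ioi 0)) (nhds vplus))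
    (Λv : Set (EuclideanSpace ℝ (Fin m))) (hΛv : IsCompact Λv)
    (γ : ℝ → EuclideanSpace ℝ (Fin m))
    (hγ : ContinuousOn γ (Set.Icc (-1 : ℝ) 1))
    (hγminus : γ (-1) = vminus) (hγplus : γ 1 = vplus)
    (hγΛ : γ '' Set.Icc (-1 : ℝ) 1 ⊆ Λv) :
    IsQDQ (fun t => {f t}) tb (f tb) Set.univ
      ((fun v => (1 : ℝ →L[ℝ] ℝ).smulRight v) '' Λv) := by
  classical
  obtain ⟨M0, hM0⟩ := hΛv.isBounded.exists_norm_le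
  set M := max M0 0 with hMdef
  have hMnn : (0:ℝ) ≤ M := le_max_right _ _
  have hM : ∀ v ∈ Λv, ‖v‖ ≤ M := fun v hv => (hM0 v hv).trans (le_max_left _ _)
  have hvplusΛ : vplus ∈ Λv := hγΛ ⟨1, by norm_num, hγplus⟩
  have hvminusΛ : vminus ∈ Λv := hγΛ ⟨-1, by norm_num, hγminus⟩
  set q : ℝ → ℝ :=
    fun s => ‖f (tb + s) - f tb - s • (if s < 0 then vminus else vplus)‖ / |s| with hqdef
  have hq0 : ∀ s, 0 ≤ q s := fun s => div_nonneg (norm_nonneg _) (abs_nonneg _)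
  have hq_eq : ∀ s : ℝ, s ≠ 0 →
      q s = dist (s⁻¹ • (f (tb + s) - f tb)) (if s < 0 then vminus else vplus) := by
    intro s hs
    rw [dist_eq_norm]
    have h1 : s⁻¹ • (f (tb + s) - f tb) - (if s < 0 then vminus else vplus)
        = s⁻¹ • (f (tb + s) - f tb - s • (if s < 0 then vminus else vplus)) := by
      match_scalars <;> field_simp
    rw [h1, norm_smul, norm_inv, Real.norm_eq_abs]
    simp only [hqdef]
    rw [div_eq_inv_mul]
  have hq_small : ∀ ε : ℝ, 0 < ε → ∃ d > 0, ∀ s : ℝ, |s| < d → q s ≤ ε := by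
    intro ε hε
    obtain ⟨dp, hdp, hp2⟩ := Metric.tendsto_nhdsWithin_nhds.mp hplus ε hε
    obtain ⟨dm, hdm, hm2⟩ := Metric.tendsto_nhdsWithin_nhds.mp hminus ε hε
    refine ⟨min dp dm, lt_min hdp hdm, fun s hs => ?_⟩
    rcases lt_trichotomy s 0 with h | h | h
    · have hd : dist s 0 < dm := by
        rw [Real.dist_eq, sub_zero]; exact hs.trans_le (min_le_right _ _)
      have := hm2 (Set.mem_Iio.mpr h) hd
      rw [hq_eq s h.ne, if_pos h]; exact this.le
    · simpa [hqdef, h] using hε.le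
    · have hd : dist s 0 < dp := by
        rw [Real.dist_eq, sub_zero]; exact hs.trans_le (min_le_left _ _)
      have := hp2 (Set.mem_Ioi.mpr h) hd
      rw [hq_eq s h.ne', if_neg (not_lt.mpr h.le)]; exact this.le
  obtain ⟨d1, hd1, hq1⟩ := hq_small 1 one_pos
  set δs := min (d1/2) (1/2) with hδsdef
  have hδs0 : 0 < δs := lt_min (by linarith) one_half_pos
  have hδs1 : δs ≤ 1/2 := min_le_right _ _
  have hδsd1 : δs < d1 := lt_of_le_of_lt (min_le_left _ _) (by linarith)
  set e : ℝ → ℝ := fun δ => sSup (q '' Set.Icc (-(min δ δs)) (min δ δs)) with hedef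
  have himle : ∀ δ, ∀ x ∈ q '' Set.Icc (-(min δ δs)) (min δ δs), x ≤ 1 := by
    rintro δ x ⟨s, hsmem, rfl⟩
    have habs : |s| ≤ δs := by
      rw [abs_le]
      exact ⟨le_trans (neg_le_neg (min_le_right _ _)) hsmem.1,
        hsmem.2.trans (min_le_right _ _)⟩
    exact hq1 s (lt_of_le_of_lt habs hδsd1)
  have hbdd : ∀ δ, BddAbove (q '' Set.Icc (-(min δ δs)) (min δ δs)) :=
    fun δ => ⟨1, fun x hx => himle δ x hx⟩
  have he_nonneg : ∀ δ, 0 ≤ e δ := by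
    intro δ
    apply Real.sSup_nonneg
    rintro x ⟨s, _, rfl⟩; exact hq0 s
  have he_boundq : ∀ δ, 0 < δ → δ ≤ δs → ∀ s : ℝ, |s| ≤ δ → q s ≤ e δ := by
    intro δ hδ0 hδδs s hs
    have hmin : min δ δs = δ := min_eq_left hδδs
    apply le_csSup (hbdd δ)
    exact ⟨s, by rw [hmin]; exact abs_le.mp hs, rfl⟩
  have he_mono : MonotoneOn e (Set.Ici 0) := by
    intro a _ b _ hab
    apply Real.sSup_le _ (he_nonneg b)
    rintro x ⟨s, hsmem, rfl⟩
    apply le_csSup (hbdd b)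
    refine ⟨s, ?_, rfl⟩
    have hmm : min a δs ≤ min b δs := min_le_min hab le_rfl
    exact ⟨le_trans (neg_le_neg hmm) hsmem.1, hsmem.2.trans hmm⟩
  have he_tendsto : Filter.Tendsto e (nhdsWithin 0 (Set.Ioi 0)) (nhds 0) := by
    rw [Metric.tendsto_nhdsWithin_nhds]
    intro ε hε
    obtain ⟨d, hd, hqd⟩ := hq_small (ε/2) (half_pos hε)
    refine ⟨d, hd, fun {δ} hδ hdist => ?_⟩
    rw [Real.dist_eq, sub_zero, abs_of_nonneg (he_nonneg δ)]
    have hδd : δ < d := by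
      rw [Real.dist_eq, sub_zero] at hdist
      exact lt_of_le_of_lt (le_abs_self δ) hdist
    have : e δ ≤ ε/2 := by
      apply Real.sSup_le _ (half_pos hε).le
      rintro x ⟨s, hsmem, rfl⟩
      apply hqd s
      have habs : |s| ≤ min δ δs := by
        rw [abs_le]; exact ⟨hsmem.1, hsmem.2⟩
      exact lt_of_le_of_lt (habs.trans (min_le_left _ _)) hδd
    linarith
  set ρ : ℝ → ℝ := fun δ => e δ + (1 + 2*M) * max δ 0 with hρdef
  have hρnn : ∀ δ, 0 ≤ ρ δ := fun δ =>
    add_nonneg (he_nonneg δ) (mul_nonneg (by linarith) (le_max_right _ _))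
  constructor
  · exact hΛv.image (ContinuousLinearMap.smulRightL ℝ ℝ
      (EuclideanSpace ℝ (Fin m)) (1 : ℝ →L[ℝ] ℝ)).continuous
  refine ⟨δs, hδs0, ρ, ⟨hρnn, ?_, ?_⟩, ?_⟩
  · intro a _ b _ hab
    exact add_le_add (he_mono ‹_› ‹_› hab)
      (mul_le_mul_of_nonneg_left (max_le_max hab le_rfl) (by linarith))
  · have h2 : Filter.Tendsto (fun δ : ℝ => (1 + 2*M) * max δ 0)
        (nhdsWithin 0 (Set.Ioi 0)) (nhds 0) := by
      have hc : Continuous (fun δ : ℝ => (1 + 2*M) * max δ 0) :=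
        continuous_const.mul (continuous_id.max continuous_const)
      have h3 := (hc.tendsto' 0 0 (by simp)).mono_left
        (nhdsWithin_le_nhds (s := Set.Ioi (0:ℝ)))
      exact h3
    simpa using he_tendsto.add h2
  intro δ hδ0 hδδs
  have hδ1 : δ < 1 := lt_of_lt_of_le hδδs (hδs1.trans (by norm_num))
  set η := δ^2 with hηdef
  have hη0 : 0 < η := by positivity
  have hηδ : η < δ := by nlinarith
  set θ : ℝ → ℝ := fun s => max (-1) (min 1 (s/η)) with hθdef
  have hθmem : ∀ s, θ s ∈ Set.Icc (-1:ℝ) 1 :=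
    fun s => ⟨le_max_left _ _, max_le (by norm_num) (min_le_left _ _)⟩
  have hθcont : Continuous θ :=
    continuous_const.max (continuous_const.min (continuous_id.div_const η))
  set g : ℝ → EuclideanSpace ℝ (Fin m) := fun t => γ (θ (t - tb)) with hgdef
  have hgcont : Continuous g :=
    hγ.comp_continuous (hθcont.comp (continuous_id.sub continuous_const))
      (fun t => hθmem _)
  refine ⟨fun t => (1 : ℝ →L[ℝ] ℝ).smulRight (g t),
    fun t => f t - f tb - (t - tb) • g t, ?_, ?_⟩
  · apply Continuous.continuousOn
    exact ((ContinuousLinearMap.smulRightL ℝ ℝ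
        (EuclideanSpace ℝ (Fin m)) (1 : ℝ →L[ℝ] ℝ)).continuous.comp hgcont).prodMk
      ((hf.sub continuous_const).sub ((continuous_id.sub continuous_const).smul hgcont))
  rintro x ⟨hx, -⟩
  have hs : |x - tb| ≤ δ := by rwa [Metric.mem_closedBall, Real.dist_eq] at hx
  set s := x - tb with hsdef
  have hxs : tb + s = x := by rw [hsdef]; ring
  have hfx : f x = f (tb + s) := by rw [hxs]
  have hgx : g x = γ (θ s) := rfl
  have hgmem : g x ∈ Λv := hγΛ ⟨θ s, hθmem s, hgx.symm⟩
  refine ⟨?_, ?_, ?_⟩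
  · rw [Metric.infDist_zero_of_mem (Set.mem_image_of_mem _ hgmem)]
    exact hρnn δ
  · -- norm bound
    have hnorm_q : ‖f (tb + s) - f tb - s • (if s < 0 then vminus else vplus)‖
        = |s| * q s := by
      rcases eq_or_ne s 0 with h | h
      · simpa [hqdef, h] using hε.le
      · simp only [hqdef]
        field_simp
    have heρ : e δ ≤ ρ δ :=
      le_add_of_nonneg_right (mul_nonneg (by linarith) (le_max_right _ _))
    rcases le_or_gt η |s| with hcase | hcase
    · -- |s| ≥ η : θ s = ±1
      have hθval : γ (θ s) = (if s < 0 then vminus else vplus) := by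
        rcases lt_or_ge s 0 with h | h
        · have hsneg : s ≤ -η := by
            rcases abs_cases s with ⟨h1, _⟩ | ⟨h1, _⟩ <;> linarith
          have hdiv : s / η ≤ -1 := by
            rw [div_le_iff₀ hη0]; linarith
          have hθs : θ s = -1 := by
            rw [hθdef]
            simp only
            rw [min_eq_right (hdiv.trans (by norm_num)), max_eq_left hdiv]
          rw [hθs, hγminus, if_pos h]
        · have hspos : η ≤ s := by
            rcases abs_cases s with ⟨h1, _⟩ | ⟨h1, _⟩ <;> linarith
          have hdiv : (1:ℝ) ≤ s / η := by
            rw [le_div_iff₀ hη0]; linarith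
          have hθs : θ s = 1 := by
            rw [hθdef]
            simp only
            rw [min_eq_left hdiv, max_eq_right (by norm_num : (-1:ℝ) ≤ 1)]
          rw [hθs, hγplus, if_neg (not_lt.mpr h)]
      calc ‖f x - f tb - s • g x‖
          = |s| * q s := by rw [hfx, hgx, hθval, hnorm_q]
        _ ≤ δ * e δ := mul_le_mul hs (he_boundq δ hδ0 hδδs.le s hs) (hq0 s) hδ0.le
        _ ≤ δ * ρ δ := mul_le_mul_of_nonneg_left heρ hδ0.le
    · -- |s| < η
      have hq1s : q s ≤ 1 := hq1 s (by
        have : η < d1 := lt_trans (lt_trans hηδ hδδs) hδsd1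
        linarith)
      have hsplit : f (tb + s) - f tb - s • g x
          = (f (tb + s) - f tb - s • (if s < 0 then vminus else vplus))
            + s • ((if s < 0 then vminus else vplus) - g x) := by
        rw [smul_sub]; abel
      have hvmem : (if s < 0 then vminus else vplus) ∈ Λv := by
        split <;> assumption
      have hb1 : ‖f (tb + s) - f tb - s • (if s < 0 then vminus else vplus)‖ ≤ η := by
        rw [hnorm_q]
        calc |s| * q s ≤ |s| * 1 := mul_le_mul_of_nonneg_left hq1s (abs_nonneg s)
          _ ≤ η := by rw [mul_one]; exact hcase.le
      have hb2 : ‖s • ((if s < 0 then vminus else vplus) - g x)‖ ≤ η * (2*M) := by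
        rw [norm_smul, Real.norm_eq_abs]
        have hn : ‖(if s < 0 then vminus else vplus) - g x‖ ≤ 2*M := by
          calc ‖(if s < 0 then vminus else vplus) - g x‖
              ≤ ‖(if s < 0 then vminus else vplus)‖ + ‖g x‖ := norm_sub_le _ _
            _ ≤ M + M := add_le_add (hM _ hvmem) (hM _ hgmem)
            _ = 2*M := by ring
        exact mul_le_mul hcase.le hn (norm_nonneg _) hη0.le
      have hmain : ‖f x - f tb - s • g x‖ ≤ η * (1 + 2*M) := by
        rw [hfx, hsplit]
        calc ‖_ + _‖ ≤ _ + _ := norm_add_le _ _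
          _ ≤ η + η * (2*M) := add_le_add hb1 hb2
          _ = η * (1 + 2*M) := by ring
      have hfin : η * (1 + 2*M) ≤ δ * ρ δ := by
        have hmax : max δ 0 = δ := max_eq_left hδ0.le
        have h1 : η * (1 + 2*M) = δ * ((1 + 2*M) * δ) := by rw [hηdef]; ring
        have h2 : (1 + 2*M) * δ ≤ ρ δ := by
          rw [hρdef]; simp only [hmax]
          exact le_add_of_nonneg_left (he_nonneg δ)
        rw [h1]
        exact mul_le_mul_of_nonneg_left h2 hδ0.le
      exact hmain.trans hfin
  · show f tb + _ + _ ∈ ({f x} : Set _)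
    rw [Set.mem_singleton_iff]
    simp only [ContinuousLinearMap.smulRight_apply, ContinuousLinearMap.one_apply]
    abel
end

section
/- QDQs and F-abundant sets: let F : ℝ^n → E ⊆ ℝ^m be a single-valued map, x̄ ∈ ℝ^n, Γ ⊆ ℝ^n, and let Λ be a Quasi Differential Quotient of F (regarded as the set-valued map x ⇝ {F(x)}) at (x̄, F(x̄)) in the direction of Γ. Suppose 𝔈 ⊆ E is F-abundant, i.e. for every η > 0 there exists a continuous map θ_η : ℝ^m → 𝔈 such that ‖F(x) − θ_η(F(x))‖ < η for all x ∈ ℝ^n. Then Λ is a Quasi Differential Quotient of the set-valued map F̃ : ℝ^n ⇝ ℝ^m defined by F̃(x) := ⋃_{η>0} {θ_η(F(x))} at (x̄, F(x̄)) in the direction of Γ. -/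
open Metric Set Filter Topology

/-- QDQs and `F`-abundant sets: a QDQ of `F` is also a QDQ of the set-valued map
obtained by composing `F` with a family of continuous maps into an `F`-abundant set. -/
theorem qdq_abundant {n m : ℕ}
    (E 𝔈 : Set (EuclideanSpace ℝ (Fin m))) (h𝔈E : 𝔈 ⊆ E)
    (F : EuclideanSpace ℝ (Fin n) → EuclideanSpace ℝ (Fin m))
    (hFE : ∀ x, F x ∈ E)
    (xb : EuclideanSpace ℝ (Fin n)) (Γ : Set (EuclideanSpace ℝ (Fin n)))
    (Λ : Set (EuclideanSpace ℝ (Fin n) →L[ℝ] EuclideanSpace ℝ (Fin m)))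
    (hΛ : IsQDQ (fun x => {F x}) xb (F xb) Γ Λ)
    (θ : ℝ → EuclideanSpace ℝ (Fin m) → EuclideanSpace ℝ (Fin m))
    (hθ : ∀ η : ℝ, 0 < η → Continuous (θ η) ∧ (∀ y, θ η y ∈ 𝔈) ∧
      ∀ x, ‖F x - θ η (F x)‖ < η) :
    IsQDQ (fun x => {y | ∃ η : ℝ, 0 < η ∧ y = θ η (F x)}) xb (F xb) Γ Λ := by
  obtain ⟨hcomp, δs, hδs, ρ, ⟨hρ0, hρmono, hρlim⟩, hq⟩ := hΛ
  refine ⟨hcomp, δs, hδs, fun δ => ρ δ + |δ|, ⟨?_, ?_, ?_⟩, ?_⟩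
  · exact fun δ => add_nonneg (hρ0 δ) (abs_nonneg δ)
  · refine hρmono.add fun a ha b hb hab => ?_
    rw [abs_of_nonneg (mem_Ici.mp ha), abs_of_nonneg (mem_Ici.mp hb)]; exact hab
  · have habs : Filter.Tendsto (fun δ : ℝ => |δ|) (nhdsWithin 0 (Set.Ioi 0)) (nhds 0) :=
      Filter.Tendsto.mono_left (by simpa using continuous_abs.tendsto (0:ℝ))
        nhdsWithin_le_nhds
    simpa using hρlim.add habs
  · intro δ hδ hδs'
    obtain ⟨L, h, hcont, hmem⟩ := hq δ hδ hδs'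
    have hη : (0:ℝ) < δ ^ 2 := by positivity
    obtain ⟨hθc, hθ𝔈, hθnear⟩ := hθ (δ ^ 2) hη
    refine ⟨L, fun x => θ (δ ^ 2) (F xb + (L x) (x - xb) + h x) - F xb - (L x) (x - xb),
      ?_, ?_⟩
    · have hL : ContinuousOn L (Metric.closedBall xb δ ∩ Γ) :=
        (continuous_fst.comp_continuousOn hcont)
      have hh : ContinuousOn h (Metric.closedBall xb δ ∩ Γ) :=
        (continuous_snd.comp_continuousOn hcont)
      have happ : ContinuousOn (fun x => (L x) (x - xb)) (Metric.closedBall xb δ ∩ Γ) :=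
        hL.clm_apply ((continuous_id.sub continuous_const).continuousOn)
      exact hL.prodMk <| ((hθc.comp_continuousOn
        ((continuousOn_const.add happ).add hh)).sub continuousOn_const).sub happ
    · intro x hx
      obtain ⟨h1, h2, h3⟩ := hmem x hx
      have hFx : F xb + (L x) (x - xb) + h x = F x := h3
      refine ⟨h1.trans (by simp [abs_nonneg]), ?_, ?_⟩
      · show ‖θ (δ ^ 2) (F xb + (L x) (x - xb) + h x) - F xb - (L x) (x - xb)‖ ≤ δ * (ρ δ + |δ|)
        rw [hFx]
        have : θ (δ ^ 2) (F x) - F xb - (L x) (x - xb) = h x - (F x - θ (δ ^ 2) (F x)) := by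
          rw [← hFx]; abel
        rw [this]
        calc ‖h x - (F x - θ (δ ^ 2) (F x))‖ ≤ ‖h x‖ + ‖F x - θ (δ ^ 2) (F x)‖ :=
              norm_sub_le _ _
          _ ≤ δ * ρ δ + δ ^ 2 := add_le_add h2 (hθnear x).le
          _ = δ * (ρ δ + δ) := by ring
          _ ≤ δ * (ρ δ + |δ|) := by
              have := le_abs_self δ
              nlinarith [hρ0 δ]
      · refine ⟨δ ^ 2, hη, ?_⟩
        show F xb + (L x) (x - xb) + (θ (δ ^ 2) (F xb + (L x) (x - xb) + h x) - F xb - (L x) (x - xb)) = θ (δ ^ 2) (F x)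
        rw [hFx]; abel
end
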